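/- arXiv:1403.2647 — 5 statements merged into one kernel-verified Lean document; each statement's English description precedes it below -/
import Mathlib

section
/- Let 1 ≤ p < ∞, let I be any index set and let (X_i)_{i∈I} be a family of real Banach spaces each having the Opial property. Then the ℓp-sum X := [⊕_{i∈I} X_i]_p has the Opial property: for every weakly null sequence (x_n) in X and every x ∈ X with x ≠ 0, limsup_n ‖x_n‖_p < limsup_n ‖x_n − x‖_p. -/
open Filter Topology MeasureTheory
open scoped ENNReal ZeroAtInfty

noncomputable section

/-- A sequence in a Banach space is weakly null if `φ (x n) → 0` for every
continuous linear functional `φ`. -/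
def WeaklyNull {X : Type*} [NormedAddCommGroup X] [NormedSpace ℝ X] (u : ℕ → X) : Prop :=
  ∀ φ : X →L[ℝ] ℝ, Tendsto (fun n => φ (u n)) atTop (𝓝 0)

/-- The Schur property: every weakly null sequence converges to `0` in norm. -/
def SchurProperty (X : Type*) [NormedAddCommGroup X] [NormedSpace ℝ X] : Prop :=
  ∀ u : ℕ → X, WeaklyNull u → Tendsto (fun n => ‖u n‖) atTop (𝓝 0)

/-- The Opial modulus `r_X(c)`. -/
def opialModulus (X : Type*) [NormedAddCommGroup X] [NormedSpace ℝ X] (c : ℝ) : ℝ :=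
  sInf { d : ℝ | ∃ (x : X) (u : ℕ → X), c ≤ ‖x‖ ∧ WeaklyNull u ∧
    1 ≤ liminf (fun n => ‖u n‖) atTop ∧
    d = liminf (fun n => ‖u n - x‖) atTop - 1 }

/-- The modulus `η_X(ε, R)`. -/
def etaModulus (X : Type*) [NormedAddCommGroup X] [NormedSpace ℝ X] (ε R : ℝ) : ℝ :=
  sInf { d : ℝ | ∃ (x : X) (u : ℕ → X), ε ≤ ‖x‖ ∧ WeaklyNull u ∧
    limsup (fun n => ‖u n‖) atTop ≤ R ∧
    d = liminf (fun n => ‖u n - x‖) atTop - liminf (fun n => ‖u n‖) atTop }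

/-- The García-Falset coefficient `R(X)`. -/
def garciaFalset (X : Type*) [NormedAddCommGroup X] [NormedSpace ℝ X] : ℝ :=
  sSup { a : ℝ | ∃ (x : X) (u : ℕ → X), ‖x‖ ≤ 1 ∧ (∀ n, ‖u n‖ ≤ 1) ∧ WeaklyNull u ∧
    a = liminf (fun n => ‖u n + x‖) atTop }

/-- The degree of WORTHness `w(X)`. -/
def worthDegree (X : Type*) [NormedAddCommGroup X] [NormedSpace ℝ X] : ℝ :=
  sSup { r : ℝ | 0 ≤ r ∧ ∀ (x : X) (u : ℕ → X), WeaklyNull u →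
    r * liminf (fun n => ‖u n + x‖) atTop ≤ liminf (fun n => ‖u n - x‖) atTop }

/-- Gao's modulus of u-convexity `u_X(ε)`. -/
def uModulus (X : Type*) [NormedAddCommGroup X] [NormedSpace ℝ X] (ε : ℝ) : ℝ :=
  sInf { d : ℝ | ∃ (x y : X) (φ : X →L[ℝ] ℝ), ‖x‖ = 1 ∧ ‖y‖ = 1 ∧ ‖φ‖ = 1 ∧
    φ x = 1 ∧ φ y ≤ 1 - ε ∧ d = 1 - ‖(2⁻¹ : ℝ) • (x + y)‖ }

/-- The c₀-sum of a family of Banach spaces: the closure, inside the ℓ∞-sum, of the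
set of finitely supported families. -/
def c0Sum {I : Type*} (X : I → Type*) [∀ i, NormedAddCommGroup (X i)]
    [∀ i, NormedSpace ℝ (X i)] : Submodule ℝ (lp X ∞) :=
  (Submodule.span ℝ { f : lp X ∞ | Set.Finite { i | (f : ∀ i, X i) i ≠ 0 } }).topologicalClosure

end

/-- A quantitative consequence of Bernoulli's inequality:
`s ^ P - t ^ P ≤ P * B ^ (P - 1) * (s - t)` for `0 ≤ t ≤ s ≤ B` and `P ≥ 1`. -/
private lemma aux_bernoulli {P s t B : ℝ} (hP : 1 ≤ P) (ht0 : 0 ≤ t) (hts : t ≤ s)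
    (hsB : s ≤ B) : s ^ P - t ^ P ≤ P * B ^ (P - 1) * (s - t) := by
  rcases eq_or_lt_of_le (ht0.trans hts) with hs | hs
  · have ht : t = 0 := le_antisymm (hts.trans hs.symm.le) ht0
    rw [ht, ← hs]
    simp
  · have hs0 : s ≠ 0 := ne_of_gt hs
    have h1 : -1 ≤ t / s - 1 := by
      have : 0 ≤ t / s := div_nonneg ht0 hs.le
      linarith
    have key : 1 + P * (t / s - 1) ≤ (t / s) ^ P := by
      have h2 := one_add_mul_self_le_rpow_one_add h1 hP
      have h3 : 1 + (t / s - 1) = t / s := by ring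
      rwa [h3] at h2
    have hsP : (0 : ℝ) < s ^ P := Real.rpow_pos_of_pos hs P
    have h4 : (1 + P * (t / s - 1)) * s ^ P ≤ t ^ P := by
      have h5 := mul_le_mul_of_nonneg_right key hsP.le
      rwa [Real.div_rpow ht0 hs.le, div_mul_cancel₀ _ (ne_of_gt hsP)] at h5
    have h5 : s ^ P - t ^ P ≤ P * (s - t) * (s ^ P / s) := by
      have h6 : s ^ P - (1 + P * (t / s - 1)) * s ^ P = P * (s - t) * (s ^ P / s) := by
        field_simp
        ring
      linarith
    have h6 : s ^ P / s = s ^ (P - 1) := by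
      rw [Real.rpow_sub hs, Real.rpow_one]
    rw [h6] at h5
    have h7 : s ^ (P - 1) ≤ B ^ (P - 1) := Real.rpow_le_rpow hs.le hsB (by linarith)
    calc s ^ P - t ^ P ≤ P * (s - t) * s ^ (P - 1) := h5
      _ ≤ P * (s - t) * B ^ (P - 1) := by
          apply mul_le_mul_of_nonneg_left h7
          exact mul_nonneg (by linarith) (by linarith)
      _ = P * B ^ (P - 1) * (s - t) := by ring

/-- The ℓᵖ-sum (`1 ≤ p < ∞`) of a family of Banach spaces with the Opial property has the
Opial property. -/
theorem statement13 (p : ℝ≥0∞) [Fact (1 ≤ p)] (hp : p ≠ ⊤) {I : Type*}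
    (X : I → Type*) [∀ i, NormedAddCommGroup (X i)] [∀ i, NormedSpace ℝ (X i)]
    [∀ i, CompleteSpace (X i)]
    (hOp : ∀ i, ∀ u : ℕ → X i, WeaklyNull u → ∀ z : X i, z ≠ 0 →
      limsup (fun n => ‖u n‖) atTop < limsup (fun n => ‖u n - z‖) atTop)
    (u : ℕ → lp X p) (hu : WeaklyNull u) (x : lp X p) (hx : x ≠ 0) :
    limsup (fun n => ‖u n‖) atTop < limsup (fun n => ‖u n - x‖) atTop := by
  classical
  have hP1 : 1 ≤ p.toReal := by
    simpa using ENNReal.toReal_mono hp (Fact.out : 1 ≤ p)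
  set P : ℝ := p.toReal with hPdef
  have hP0 : 0 < P := lt_of_lt_of_le one_pos hP1
  have hp0 : p ≠ 0 := by
    intro h
    have h1 : (1 : ℝ≥0∞) ≤ 0 := h ▸ (Fact.out : 1 ≤ p)
    simp at h1
  -- component projections as continuous linear maps
  have hproj : ∀ (i : I) (f : lp X p), ‖f i‖ ≤ ‖f‖ := fun i f => lp.norm_apply_le_norm hp0 f i
  let π : ∀ i : I, lp X p →L[ℝ] X i := fun i =>
    LinearMap.mkContinuous
      { toFun := fun f => f i
        map_add' := fun f g => congrFun (lp.coeFn_add f g) i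
        map_smul' := fun c f => congrFun (lp.coeFn_smul c f) i }
      1 (fun f => by rw [one_mul]; exact hproj i f)
  -- components of weakly null sequences are weakly null
  have hwc : ∀ (w : ℕ → lp X p), WeaklyNull w → ∀ i, WeaklyNull fun n => w n i := by
    intro w hw i φ
    exact hw (φ.comp (π i))
  have hbase : ∀ θ : ℕ → ℕ, StrictMono θ → WeaklyNull fun k => u (θ k) := fun θ hθ φ =>
    (hu φ).comp hθ.tendsto_atTop
  -- boundedness of weakly null sequences (Banach-Steinhaus)
  obtain ⟨C, hC0, hC⟩ : ∃ C : ℝ, 0 ≤ C ∧ ∀ n, ‖u n‖ ≤ C := by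
    have hpt : ∀ φ : StrongDual ℝ (lp X p), ∃ b : ℝ,
        ∀ n, ‖NormedSpace.inclusionInDoubleDual ℝ (lp X p) (u n) φ‖ ≤ b := by
      intro φ
      have h3 : Tendsto (fun n => ‖φ (u n)‖) atTop (𝓝 ‖(0 : ℝ)‖) := (hu φ).norm
      obtain ⟨b, hb⟩ := h3.bddAbove_range
      refine ⟨b, fun n => ?_⟩
      have h4 : ‖φ (u n)‖ ≤ b := hb (Set.mem_range_self n)
      simpa [NormedSpace.dual_def] using h4
    obtain ⟨C', hC'⟩ := banach_steinhaus
        (g := fun n => NormedSpace.inclusionInDoubleDual ℝ (lp X p) (u n)) hpt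
    refine ⟨max C' 0, le_max_right _ _, fun n => ?_⟩
    have h1 : ‖NormedSpace.inclusionInDoubleDual ℝ (lp X p) (u n)‖ = ‖u n‖ :=
      (NormedSpace.inclusionInDoubleDualLi ℝ).norm_map (u n)
    have h2 := hC' n
    rw [h1] at h2
    exact h2.trans (le_max_left _ _)
  set L := limsup (fun n => ‖u n‖) atTop with hL
  have hBddU : IsBoundedUnder (· ≤ ·) atTop fun n => ‖u n‖ := isBoundedUnder_of ⟨C, hC⟩
  -- a subsequence along which the norm approaches the limsup from below
  have hfreq : ∀ k : ℕ, ∃ᶠ n in atTop, L - 1 / ((k : ℝ) + 1) < ‖u n‖ := by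
    intro k
    apply frequently_lt_of_lt_limsup
    · exact (isBoundedUnder_of ⟨0, fun n => norm_nonneg _⟩ :
        IsBoundedUnder (· ≥ ·) atTop fun n => ‖u n‖).isCoboundedUnder_le
    · have h5 : (0 : ℝ) < 1 / ((k : ℝ) + 1) := by positivity
      linarith
  obtain ⟨φ1, hφ1, hφ1'⟩ := extraction_forall_of_frequently hfreq
  -- a coordinate where x is nonzero
  obtain ⟨i0, hi0⟩ : ∃ i, x i ≠ 0 := by
    by_contra h
    push_neg at h
    exact hx (lp.ext (by funext i; simp [h i]))
  -- Bolzano-Weierstrass on (‖v k‖, ‖v k i0‖, ‖v k i0 - x i0‖)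
  have hq2mem : ∀ k : ℕ,
      (‖u (φ1 k)‖, ‖u (φ1 k) i0‖, ‖u (φ1 k) i0 - x i0‖) ∈
        Metric.closedBall (0 : ℝ × ℝ × ℝ) (C + ‖x‖) := by
    intro k
    rw [Metric.mem_closedBall, dist_zero_right]
    rw [Prod.norm_def]
    apply max_le
    · rw [Real.norm_eq_abs, abs_of_nonneg (norm_nonneg _)]
      exact (hC _).trans (by linarith [norm_nonneg x])
    rw [Prod.norm_def]
    apply max_le
    · rw [Real.norm_eq_abs, abs_of_nonneg (norm_nonneg _)]
      exact ((hproj i0 _).trans (hC _)).trans (by linarith [norm_nonneg x])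
    · rw [Real.norm_eq_abs, abs_of_nonneg (norm_nonneg _)]
      calc ‖u (φ1 k) i0 - x i0‖ ≤ ‖u (φ1 k) i0‖ + ‖x i0‖ := norm_sub_le _ _
        _ ≤ C + ‖x‖ := add_le_add ((hproj i0 _).trans (hC _)) (hproj i0 x)
  obtain ⟨lab, -, ψ2, hψ2, hψ2'⟩ :=
    tendsto_subseq_of_bounded Metric.isBounded_closedBall hq2mem
  obtain ⟨ℓ, a, b⟩ := lab
  have h_l : Tendsto (fun k => ‖u (φ1 (ψ2 k))‖) atTop (𝓝 ℓ) :=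
    (continuous_fst.tendsto _).comp hψ2'
  have h_a : Tendsto (fun k => ‖u (φ1 (ψ2 k)) i0‖) atTop (𝓝 a) :=
    ((continuous_fst.comp continuous_snd).tendsto _).comp hψ2'
  have h_b : Tendsto (fun k => ‖u (φ1 (ψ2 k)) i0 - x i0‖) atTop (𝓝 b) :=
    ((continuous_snd.comp continuous_snd).tendsto _).comp hψ2'
  have hl0 : 0 ≤ ℓ := ge_of_tendsto' h_l fun k => norm_nonneg _
  have ha0 : 0 ≤ a := ge_of_tendsto' h_a fun k => norm_nonneg _
  have hLl : L ≤ ℓ := by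
    have h1 : Tendsto (fun k : ℕ => L - 1 / ((k : ℝ) + 1)) atTop (𝓝 L) := by
      have := tendsto_one_div_add_atTop_nhds_zero_nat (𝕜 := ℝ)
      simpa using tendsto_const_nhds.sub this
    refine le_of_tendsto_of_tendsto h1 h_l (Eventually.of_forall fun k => ?_)
    have h2 := hφ1' (ψ2 k)
    have h3 : L - 1 / ((k : ℝ) + 1) ≤ L - 1 / ((ψ2 k : ℝ) + 1) := by
      have h4 : (k : ℝ) + 1 ≤ (ψ2 k : ℝ) + 1 := by
        have h6 : k ≤ ψ2 k := hψ2.le_apply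
        exact_mod_cast Nat.succ_le_succ h6
      have h5 := one_div_le_one_div_of_le (by positivity) h4
      linarith
    exact h3.trans h2.le
  -- the key gap coming from the Opial property at coordinate i0
  have hab : a < b := by
    have h1 := hOp i0 (fun k => u (φ1 (ψ2 k)) i0)
      (hwc (fun k => u (φ1 (ψ2 k))) (hbase _ (hφ1.comp hψ2)) i0) (x i0) hi0
    rwa [h_a.limsup_eq, h_b.limsup_eq] at h1
  have hγ : 0 < b ^ P - a ^ P := by
    have := Real.rpow_lt_rpow ha0 hab hP0
    linarith
  set γ : ℝ := b ^ P - a ^ P with hγdef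
  set K : ℝ := P * (ℓ + 1) ^ (P - 1) with hKdef
  have hK0 : 0 < K := mul_pos hP0 (Real.rpow_pos_of_pos (by linarith) _)
  set δ : ℝ := γ / (2 * K) with hδdef
  have hδ0 : 0 < δ := div_pos hγ (by linarith)
  have hKδ : K * δ = γ / 2 := by
    rw [hδdef]
    field_simp
  -- choose a finite set F containing i0 outside of which x is small
  have hsx : Summable fun i => ‖x i‖ ^ P := (lp.memℓp x).summable hP0
  have hδP : 0 < δ ^ P := Real.rpow_pos_of_pos hδ0 P
  obtain ⟨F0, hF0⟩ := eventually_atTop.mp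
    ((tendsto_tsum_compl_atTop_zero (fun i => ‖x i‖ ^ P)).eventually_lt_const hδP)
  set F : Finset I := insert i0 F0 with hFdef
  have hi0F : i0 ∈ F := Finset.mem_insert_self _ _
  have hFtail : ∑' i : { i : I // i ∉ F }, ‖x ↑i‖ ^ P < δ ^ P :=
    hF0 F (Finset.subset_insert i0 F0)
  -- restriction to the complement of F
  have memR : ∀ f : lp X p, Memℓp (fun j : { i : I // i ∉ F } => f ↑j) p := fun f =>
    memℓp_gen (((lp.memℓp f).summable hP0).subtype {i : I | i ∉ F})
  let R : lp X p → lp (fun j : { i : I // i ∉ F } => X ↑j) p := fun f => ⟨fun j => f ↑j, memR f⟩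
  have hRnorm : ∀ f : lp X p, ‖R f‖ ^ P = ∑' j : { i : I // i ∉ F }, ‖f ↑j‖ ^ P := fun f =>
    lp.norm_rpow_eq_tsum hP0 (R f)
  have hRsub : ∀ f g : lp X p, R (f - g) = R f - R g := by
    intro f g
    apply lp.ext
    funext j
    have h1 : (⇑(R f - R g) : ∀ j : { i : I // i ∉ F }, X ↑j) j = R f j - R g j :=
      congrFun (lp.coeFn_sub (R f) (R g)) j
    have h2 : (f - g) (↑j : I) = f ↑j - g ↑j := congrFun (lp.coeFn_sub f g) ↑j
    exact h2.trans h1.symm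
  have hRx : ‖R x‖ ≤ δ := by
    have h1 : ‖R x‖ ^ P ≤ δ ^ P := by
      rw [hRnorm]
      exact hFtail.le
    exact (Real.rpow_le_rpow_iff (norm_nonneg _) hδ0.le hP0).mp h1
  have hsplit : ∀ f : lp X p, ‖f‖ ^ P = (∑ i ∈ F, ‖f i‖ ^ P) + ‖R f‖ ^ P := by
    intro f
    rw [lp.norm_rpow_eq_tsum hP0 f, hRnorm]
    exact (Summable.sum_add_tsum_compl (s := F) ((lp.memℓp f).summable hP0)).symm
  have hRle : ∀ f : lp X p, ‖R f‖ ≤ ‖f‖ := by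
    intro f
    have h1 : ‖R f‖ ^ P ≤ ‖f‖ ^ P := by
      rw [hsplit f]
      have : 0 ≤ ∑ i ∈ F, ‖f i‖ ^ P :=
        Finset.sum_nonneg fun i _ => Real.rpow_nonneg (norm_nonneg _) _
      linarith
    exact (Real.rpow_le_rpow_iff (norm_nonneg _) (norm_nonneg _) hP0).mp h1
  -- second Bolzano-Weierstrass extraction over the coordinates of F
  have hq4mem : ∀ k : ℕ,
      ((fun i : ↑F => (‖u (φ1 (ψ2 k)) ↑i‖, ‖u (φ1 (ψ2 k)) ↑i - x ↑i‖)),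
        ‖R (u (φ1 (ψ2 k)))‖) ∈
        Metric.closedBall (0 : (↑F → ℝ × ℝ) × ℝ) (C + ‖x‖) := by
    intro k
    rw [Metric.mem_closedBall, dist_zero_right, Prod.norm_def]
    have hCx : (0:ℝ) ≤ C + ‖x‖ := by positivity
    apply max_le
    · rw [pi_norm_le_iff_of_nonneg hCx]
      intro i
      rw [Prod.norm_def]
      apply max_le
      · rw [Real.norm_eq_abs, abs_of_nonneg (norm_nonneg _)]
        exact ((hproj _ _).trans (hC _)).trans (by linarith [norm_nonneg x])
      · rw [Real.norm_eq_abs, abs_of_nonneg (norm_nonneg _)]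
        calc ‖u (φ1 (ψ2 k)) ↑i - x ↑i‖ ≤ ‖u (φ1 (ψ2 k)) ↑i‖ + ‖x ↑i‖ := norm_sub_le _ _
          _ ≤ C + ‖x‖ := add_le_add ((hproj _ _).trans (hC _)) (hproj _ x)
    · rw [Real.norm_eq_abs, abs_of_nonneg (norm_nonneg _)]
      exact ((hRle _).trans (hC _)).trans (by linarith [norm_nonneg x])
  obtain ⟨q4lim, -, ψ3, hψ3, hlim4⟩ :=
    tendsto_subseq_of_bounded Metric.isBounded_closedBall hq4mem
  obtain ⟨AB, sR⟩ := q4lim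
  have hA : ∀ i : ↑F, Tendsto (fun k => ‖u (φ1 (ψ2 (ψ3 k))) ↑i‖) atTop (𝓝 (AB i).1) := by
    intro i
    have hcont : Continuous fun z : (↑F → ℝ × ℝ) × ℝ => (z.1 i).1 :=
      continuous_fst.comp ((continuous_apply i).comp continuous_fst)
    exact (hcont.tendsto (AB, sR)).comp hlim4
  have hB : ∀ i : ↑F, Tendsto (fun k => ‖u (φ1 (ψ2 (ψ3 k))) ↑i - x ↑i‖) atTop (𝓝 (AB i).2) := by
    intro i
    have hcont : Continuous fun z : (↑F → ℝ × ℝ) × ℝ => (z.1 i).2 :=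
      continuous_snd.comp ((continuous_apply i).comp continuous_fst)
    exact (hcont.tendsto (AB, sR)).comp hlim4
  have hsR : Tendsto (fun k => ‖R (u (φ1 (ψ2 (ψ3 k))))‖) atTop (𝓝 sR) :=
    (continuous_snd.tendsto _).comp hlim4
  have hℓw : Tendsto (fun k => ‖u (φ1 (ψ2 (ψ3 k)))‖) atTop (𝓝 ℓ) :=
    h_l.comp hψ3.tendsto_atTop
  have hsR0 : 0 ≤ sR := ge_of_tendsto' hsR fun k => norm_nonneg _
  have hA0 : ∀ i : ↑F, 0 ≤ (AB i).1 := fun i => ge_of_tendsto' (hA i) fun k => norm_nonneg _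
  -- identify the limits at i0
  have hj0a : (AB ⟨i0, hi0F⟩).1 = a :=
    tendsto_nhds_unique (hA ⟨i0, hi0F⟩) (h_a.comp hψ3.tendsto_atTop)
  have hj0b : (AB ⟨i0, hi0F⟩).2 = b :=
    tendsto_nhds_unique (hB ⟨i0, hi0F⟩) (h_b.comp hψ3.tendsto_atTop)
  -- Opial/triviality on each coordinate of F
  have hABle : ∀ i : ↑F, (AB i).1 ≤ (AB i).2 := by
    intro i
    rcases eq_or_ne (x ↑i) 0 with hxi | hxi
    · have hB' := hB i
      simp only [hxi, sub_zero] at hB'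
      exact le_of_eq (tendsto_nhds_unique (hA i) hB')
    · have h1 := hOp ↑i (fun k => u (φ1 (ψ2 (ψ3 k))) ↑i)
        (hwc (fun k => u (φ1 (ψ2 (ψ3 k)))) (hbase _ (hφ1.comp (hψ2.comp hψ3))) ↑i) (x ↑i) hxi
      rw [(hA i).limsup_eq, (hB i).limsup_eq] at h1
      exact h1.le
  -- continuity helper for rpow
  have hrpowT : ∀ {f : ℕ → ℝ} {c : ℝ}, Tendsto f atTop (𝓝 c) →
      Tendsto (fun k => f k ^ P) atTop (𝓝 (c ^ P)) := fun {f c} h =>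
    ((Real.continuousAt_rpow_const c P (Or.inr hP0.le)).tendsto).comp h
  -- limit identity for ‖w k‖ ^ P
  have hkey1 : ℓ ^ P = (∑ j ∈ F.attach, (AB j).1 ^ P) + sR ^ P := by
    have t1 : Tendsto (fun k => ‖u (φ1 (ψ2 (ψ3 k)))‖ ^ P) atTop (𝓝 (ℓ ^ P)) := hrpowT hℓw
    have t2 : Tendsto
        (fun k => (∑ j ∈ F.attach, ‖u (φ1 (ψ2 (ψ3 k))) ↑j‖ ^ P) + ‖R (u (φ1 (ψ2 (ψ3 k))))‖ ^ P)
        atTop (𝓝 ((∑ j ∈ F.attach, (AB j).1 ^ P) + sR ^ P)) :=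
      (tendsto_finset_sum _ fun j _ => hrpowT (hA j)).add (hrpowT hsR)
    have t3 : ∀ k, ‖u (φ1 (ψ2 (ψ3 k)))‖ ^ P =
        (∑ j ∈ F.attach, ‖u (φ1 (ψ2 (ψ3 k))) ↑j‖ ^ P) + ‖R (u (φ1 (ψ2 (ψ3 k))))‖ ^ P := by
      intro k
      rw [hsplit, ← Finset.sum_attach F (fun i => ‖u (φ1 (ψ2 (ψ3 k))) i‖ ^ P)]
    exact tendsto_nhds_unique (t1.congr t3) t2
  have hsl : sR ≤ ℓ := by
    have h1 : sR ^ P ≤ ℓ ^ P := by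
      rw [hkey1]
      have : 0 ≤ ∑ j ∈ F.attach, (AB j).1 ^ P :=
        Finset.sum_nonneg fun j _ => Real.rpow_nonneg (hA0 j) _
      linarith
    exact (Real.rpow_le_rpow_iff hsR0 hl0 hP0).mp h1
  -- lower bound for ‖w k - x‖ ^ P
  have hlow : ∀ k,
      (∑ j ∈ F.attach, ‖u (φ1 (ψ2 (ψ3 k))) ↑j - x ↑j‖ ^ P) + max (‖R (u (φ1 (ψ2 (ψ3 k))))‖ - δ) 0 ^ P
        ≤ ‖u (φ1 (ψ2 (ψ3 k))) - x‖ ^ P := by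
    intro k
    rw [hsplit (u (φ1 (ψ2 (ψ3 k))) - x),
      ← Finset.sum_attach F (fun i => ‖(u (φ1 (ψ2 (ψ3 k))) - x) i‖ ^ P)]
    have e1 : ∀ j : ↑F, ‖(u (φ1 (ψ2 (ψ3 k))) - x) (↑j : I)‖ ^ P
        = ‖u (φ1 (ψ2 (ψ3 k))) ↑j - x ↑j‖ ^ P := by
      intro j
      rw [congrFun (lp.coeFn_sub (u (φ1 (ψ2 (ψ3 k)))) x) (↑j : I)]
      rfl
    rw [Finset.sum_congr rfl fun j _ => e1 j]
    apply add_le_add (le_refl _)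
    have h2 : ‖R (u (φ1 (ψ2 (ψ3 k))))‖ - δ ≤ ‖R (u (φ1 (ψ2 (ψ3 k))) - x)‖ := by
      rw [hRsub]
      have h3 := norm_sub_norm_le (R (u (φ1 (ψ2 (ψ3 k))))) (R x)
      linarith [hRx]
    have h4 : max (‖R (u (φ1 (ψ2 (ψ3 k))))‖ - δ) 0 ≤ ‖R (u (φ1 (ψ2 (ψ3 k))) - x)‖ :=
      max_le h2 (norm_nonneg _)
    exact Real.rpow_le_rpow (le_max_right _ _) h4 hP0.le
  -- the limit of the lower bound
  set Q : ℝ := (∑ j ∈ F.attach, (AB j).2 ^ P) + max (sR - δ) 0 ^ P with hQdef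
  have hQtend : Tendsto
      (fun k => (∑ j ∈ F.attach, ‖u (φ1 (ψ2 (ψ3 k))) ↑j - x ↑j‖ ^ P)
        + max (‖R (u (φ1 (ψ2 (ψ3 k))))‖ - δ) 0 ^ P) atTop (𝓝 Q) := by
    refine (tendsto_finset_sum _ fun j _ => hrpowT (hB j)).add (hrpowT ?_)
    exact (hsR.sub tendsto_const_nhds).max tendsto_const_nhds
  -- the main strict inequality : ℓ ^ P < Q
  have hsum : (∑ j ∈ F.attach, (AB j).1 ^ P) + γ ≤ ∑ j ∈ F.attach, (AB j).2 ^ P := by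
    have h1 : ∀ j ∈ F.attach, 0 ≤ (AB j).2 ^ P - (AB j).1 ^ P := fun j _ => by
      have := Real.rpow_le_rpow (hA0 j) (hABle j) hP0.le
      linarith
    have h2 := Finset.single_le_sum h1 (Finset.mem_attach F ⟨i0, hi0F⟩)
    rw [Finset.sum_sub_distrib, hj0a, hj0b] at h2
    rw [hγdef]
    linarith
  have hbern : sR ^ P - max (sR - δ) 0 ^ P ≤ γ / 2 := by
    have h1 : max (sR - δ) 0 ≤ sR := max_le (by linarith) hsR0
    have h2 := aux_bernoulli hP1 (le_max_right (sR - δ) 0) h1 (by linarith : sR ≤ ℓ + 1)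
    have h3 : sR - max (sR - δ) 0 ≤ δ := by
      have := le_max_left (sR - δ) 0
      linarith
    have h4 : P * (ℓ + 1) ^ (P - 1) * (sR - max (sR - δ) 0) ≤ K * δ := by
      rw [hKdef]
      exact mul_le_mul_of_nonneg_left h3 hK0.le
    rw [hKδ] at h4
    linarith
  have hQl : ℓ ^ P < Q := by
    rw [hQdef, hkey1]
    linarith
  -- conclude
  have hQ0 : 0 ≤ Q := le_trans (Real.rpow_nonneg hl0 P) hQl.le
  have hlQ : ℓ < Q ^ (1 / P) := by
    have h1 : ℓ = (ℓ ^ P) ^ (1 / P) := by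
      rw [← Real.rpow_mul hl0, mul_one_div, div_self hP0.ne', Real.rpow_one]
    rw [h1]
    exact Real.rpow_lt_rpow (Real.rpow_nonneg hl0 P) hQl (by positivity)
  set c : ℝ := (ℓ + Q ^ (1 / P)) / 2 with hcdef
  have hc1 : ℓ < c := by rw [hcdef]; linarith
  have hc2 : c < Q ^ (1 / P) := by rw [hcdef]; linarith
  have hc0 : 0 ≤ c := le_trans hl0 hc1.le
  have hcP : c ^ P < Q := by
    have h1 := Real.rpow_lt_rpow hc0 hc2 hP0
    rwa [← Real.rpow_mul hQ0, one_div_mul_cancel hP0.ne', Real.rpow_one] at h1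
  have hev : ∀ᶠ k in atTop, c ≤ ‖u (φ1 (ψ2 (ψ3 k))) - x‖ := by
    filter_upwards [hQtend.eventually_const_lt hcP] with k hk
    by_contra h
    push_neg at h
    have h1 := Real.rpow_le_rpow (norm_nonneg _) h.le hP0.le
    linarith [hlow k]
  have hθt : Tendsto (fun k => φ1 (ψ2 (ψ3 k))) atTop atTop :=
    (hφ1.comp (hψ2.comp hψ3)).tendsto_atTop
  have hfreq2 : ∃ᶠ n in atTop, c ≤ ‖u n - x‖ := hθt.frequently hev.frequently
  have hBddD : IsBoundedUnder (· ≤ ·) atTop fun n => ‖u n - x‖ :=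
    isBoundedUnder_of ⟨C + ‖x‖, fun n => (norm_sub_le _ _).trans (by linarith [hC n])⟩
  have hcM : c ≤ limsup (fun n => ‖u n - x‖) atTop := le_limsup_of_frequently_le hfreq2 hBddD
  calc L ≤ ℓ := hLl
    _ < c := hc1
    _ ≤ _ := hcM
end

section
/- Let 1 ≤ p < ∞, let I be any index set and let (X_i)_{i∈I} be a family of real Banach spaces each having the nonstrict Opial property. Then the ℓp-sum X := [⊕_{i∈I} X_i]_p has the nonstrict Opial property: for every weakly null sequence (x_n) in X and every x ∈ X, limsup_n ‖x_n‖_p ≤ limsup_n ‖x_n − x‖_p. -/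
open Filter Topology MeasureTheory
open scoped ENNReal ZeroAtInfty

section AuxOpial

open Filter Topology
open scoped ENNReal

lemma weaklyNull_bounded {Y : Type*} [NormedAddCommGroup Y] [NormedSpace ℝ Y]
    (u : ℕ → Y) (hu : WeaklyNull u) : ∃ C : ℝ, ∀ n, ‖u n‖ ≤ C := by
  have key : ∀ φ : StrongDual ℝ Y, ∃ C, ∀ n,
      ‖(NormedSpace.inclusionInDoubleDual ℝ Y (u n)) φ‖ ≤ C := by
    intro φ
    have h0 : Tendsto (fun n => ‖φ (u n)‖) atTop (𝓝 ‖(0:ℝ)‖) := (hu φ).norm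
    obtain ⟨C, hC⟩ := h0.bddAbove_range
    exact ⟨C, fun n => hC (Set.mem_range_self n)⟩
  obtain ⟨C, hC⟩ := banach_steinhaus key
  refine ⟨C, fun n => ?_⟩
  exact le_trans (le_of_eq
    ((NormedSpace.inclusionInDoubleDualLi ℝ (E := Y)).norm_map (u n)).symm) (hC n)

lemma mapClusterPt_limsup (f : ℕ → ℝ) (h1 : IsBoundedUnder (· ≤ ·) atTop f)
    (h2 : IsBoundedUnder (· ≥ ·) atTop f) :
    MapClusterPt (limsup f atTop) atTop f := by
  rw [mapClusterPt_iff_frequently]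
  intro s hs
  obtain ⟨ε, hε, hball⟩ := Metric.mem_nhds_iff.mp hs
  have hfr : ∃ᶠ n in atTop, limsup f atTop - ε < f n :=
    frequently_lt_of_lt_limsup h2.isCoboundedUnder_le (by linarith)
  have hev : ∀ᶠ n in atTop, f n < limsup f atTop + ε :=
    eventually_lt_of_limsup_lt (by linarith) h1
  refine (hfr.and_eventually hev).mono fun n hn => hball ?_
  rw [Metric.mem_ball, Real.dist_eq, abs_lt]
  exact ⟨by linarith [hn.1], by linarith [hn.2]⟩

lemma ultrafilter_tendsto_of_bounded (𝒰 : Ultrafilter ℕ) (g : ℕ → ℝ) {C : ℝ}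
    (h : ∀ n, |g n| ≤ C) : ∃ a, Tendsto g (↑𝒰) (𝓝 a) := by
  have hle : ↑(𝒰.map g) ≤ 𝓟 (Set.Icc (-C) C) := by
    rw [Ultrafilter.coe_map, le_principal_iff, mem_map]
    exact Filter.univ_mem' (fun n => abs_le.mp (h n))
  obtain ⟨a, -, ha⟩ := (isCompact_Icc (a := -C) (b := C)).ultrafilter_le_nhds (𝒰.map g) hle
  exact ⟨a, ha⟩

section
variable (p : ℝ≥0∞) [Fact (1 ≤ p)] {I : Type*} (X : I → Type*)
  [∀ i, NormedAddCommGroup (X i)] [∀ i, NormedSpace ℝ (X i)]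

noncomputable def lpCoord (i : I) : lp X p →L[ℝ] X i :=
  LinearMap.mkContinuous
    { toFun := fun f => f i
      map_add' := fun f g => by simp [lp.coeFn_add]
      map_smul' := fun c f => by simp [lp.coeFn_smul] }
    1 (fun f => by
      rw [one_mul]
      exact lp.norm_apply_le_norm
        (zero_lt_one.trans_le (Fact.out : (1:ℝ≥0∞) ≤ p)).ne' f i)

lemma weaklyNull_coord {u : ℕ → lp X p} (hu : WeaklyNull u) (i : I) :
    WeaklyNull (fun n => (u n : ∀ j, X j) i) := fun ψ =>
  hu (ψ.comp (lpCoord p X i))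

end

lemma weaklyNull_comp {Y : Type*} [NormedAddCommGroup Y] [NormedSpace ℝ Y]
    {u : ℕ → Y} (hu : WeaklyNull u) {ψ : ℕ → ℕ} (hψ : StrictMono ψ) :
    WeaklyNull (fun k => u (ψ k)) := fun φ => (hu φ).comp hψ.tendsto_atTop

lemma aux_finsupp (p : ℝ≥0∞) [Fact (1 ≤ p)] (hp : p ≠ ⊤) {I : Type*}
    (X : I → Type*) [∀ i, NormedAddCommGroup (X i)] [∀ i, NormedSpace ℝ (X i)]
    (hOp : ∀ i, ∀ u : ℕ → X i, WeaklyNull u → ∀ z : X i,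
      limsup (fun n => ‖u n‖) atTop ≤ limsup (fun n => ‖u n - z‖) atTop)
    (u : ℕ → lp X p) (hu : WeaklyNull u) (x : lp X p) (F : Finset I)
    (hxF : ∀ i ∉ F, (x : ∀ j, X j) i = 0) :
    limsup (fun n => ‖u n‖) atTop ≤ limsup (fun n => ‖u n - x‖) atTop := by
  have hp0 : p ≠ 0 := (zero_lt_one.trans_le (Fact.out : (1:ℝ≥0∞) ≤ p)).ne'
  have hpt : 0 < p.toReal := ENNReal.toReal_pos hp0 hp
  obtain ⟨C, hC⟩ := weaklyNull_bounded u hu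
  have hC0 : 0 ≤ C := le_trans (norm_nonneg _) (hC 0)
  have hb1 : IsBoundedUnder (· ≤ ·) atTop (fun n => ‖u n‖) :=
    isBoundedUnder_of ⟨C, hC⟩
  have hb2 : IsBoundedUnder (· ≥ ·) atTop (fun n => ‖u n‖) :=
    isBoundedUnder_of ⟨0, fun n => norm_nonneg _⟩
  set L := limsup (fun n => ‖u n‖) atTop with hLdef
  obtain ⟨𝒰, h𝒰, hUL⟩ := mapClusterPt_iff_ultrafilter.mp (mapClusterPt_limsup _ hb1 hb2)
  obtain ⟨B, hB⟩ := ultrafilter_tendsto_of_bounded 𝒰 (fun n => ‖u n - x‖) (C := C + ‖x‖)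
    (fun n => by
      rw [abs_of_nonneg (norm_nonneg _)]
      exact (norm_sub_le _ _).trans (add_le_add_left (hC n) _))
  have hcoord : ∀ i : I, ∃ ac : ℝ × ℝ,
      Tendsto (fun n => ‖(u n : ∀ j, X j) i‖) (↑𝒰) (𝓝 ac.1) ∧
      Tendsto (fun n => ‖(u n : ∀ j, X j) i - (x : ∀ j, X j) i‖) (↑𝒰) (𝓝 ac.2) := by
    intro i
    obtain ⟨a, ha⟩ := ultrafilter_tendsto_of_bounded 𝒰 (fun n => ‖(u n : ∀ j, X j) i‖)
      (C := C) (fun n => by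
        rw [abs_of_nonneg (norm_nonneg _)]
        exact (lp.norm_apply_le_norm hp0 (u n) i).trans (hC n))
    obtain ⟨c, hc⟩ := ultrafilter_tendsto_of_bounded 𝒰
      (fun n => ‖(u n : ∀ j, X j) i - (x : ∀ j, X j) i‖)
      (C := C + ‖(x : ∀ j, X j) i‖) (fun n => by
        rw [abs_of_nonneg (norm_nonneg _)]
        exact (norm_sub_le _ _).trans
          (add_le_add_left ((lp.norm_apply_le_norm hp0 (u n) i).trans (hC n)) _))
    exact ⟨(a, c), ha, hc⟩
  choose ac hac1 hac2 using hcoord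
  set a : I → ℝ := fun i => (ac i).1
  set c : I → ℝ := fun i => (ac i).2
  -- product convergence along the ultrafilter
  let G : ℕ → ℝ × ℝ × (↥F → ℝ) × (↥F → ℝ) := fun n =>
    (‖u n‖, ‖u n - x‖, fun i => ‖(u n : ∀ j, X j) i‖,
      fun i => ‖(u n : ∀ j, X j) i - (x : ∀ j, X j) i‖)
  have hG : Tendsto G (↑𝒰)
      (𝓝 (L, B, (fun i : ↥F => a i), (fun i : ↥F => c i))) := by
    refine hUL.prodMk_nhds (hB.prodMk_nhds (Tendsto.prodMk_nhds ?_ ?_))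
    · exact tendsto_pi_nhds.mpr fun i => hac1 i
    · exact tendsto_pi_nhds.mpr fun i => hac2 i
  obtain ⟨ψ, hψ, hψt⟩ := TopologicalSpace.FirstCountableTopology.tendsto_subseq
    (mapClusterPt_iff_ultrafilter.mpr ⟨𝒰, h𝒰, hG⟩)
  have h1 : Tendsto (fun k => ‖u (ψ k)‖) atTop (𝓝 L) :=
    (continuous_fst.tendsto _).comp hψt
  have h2 : Tendsto (fun k => ‖u (ψ k) - x‖) atTop (𝓝 B) :=
    ((continuous_fst.comp continuous_snd).tendsto _).comp hψt
  have h3 : ∀ i : F, Tendsto (fun k => ‖(u (ψ k) : ∀ j, X j) i‖) atTop (𝓝 (a i)) := by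
    intro i
    exact (((continuous_apply i).comp
      (continuous_fst.comp (continuous_snd.comp continuous_snd))).tendsto _).comp hψt
  have h4 : ∀ i : F, Tendsto
      (fun k => ‖(u (ψ k) : ∀ j, X j) i - (x : ∀ j, X j) i‖) atTop (𝓝 (c i)) := by
    intro i
    exact (((continuous_apply i).comp
      (continuous_snd.comp (continuous_snd.comp continuous_snd))).tendsto _).comp hψt
  have hwv : WeaklyNull (fun k => u (ψ k)) := weaklyNull_comp hu hψ
  have hac : ∀ i : F, a i ≤ c i := by
    intro i
    have hwc : WeaklyNull (fun k => (u (ψ k) : ∀ j, X j) (i : I)) :=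
      weaklyNull_coord p X hwv (i : I)
    have h := hOp (i : I) _ hwc ((x : ∀ j, X j) i)
    rwa [(h3 i).limsup_eq, (h4 i).limsup_eq] at h
  have ha0 : ∀ i : F, 0 ≤ a i := fun i =>
    ge_of_tendsto (h3 i) (Eventually.of_forall fun k => norm_nonneg _)
  -- key identity
  have hkey : ∀ k, ‖u (ψ k) - x‖ ^ p.toReal - ‖u (ψ k)‖ ^ p.toReal
      = ∑ i ∈ F, (‖(u (ψ k) : ∀ j, X j) i - (x : ∀ j, X j) i‖ ^ p.toReal
        - ‖(u (ψ k) : ∀ j, X j) i‖ ^ p.toReal) := by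
    intro k
    have hs := (lp.hasSum_norm hpt (u (ψ k) - x)).sub (lp.hasSum_norm hpt (u (ψ k)))
    have hcongr : (fun i => ‖((u (ψ k) - x : lp X p) : ∀ j, X j) i‖ ^ p.toReal
        - ‖(u (ψ k) : ∀ j, X j) i‖ ^ p.toReal)
        = fun i => ‖(u (ψ k) : ∀ j, X j) i - (x : ∀ j, X j) i‖ ^ p.toReal
          - ‖(u (ψ k) : ∀ j, X j) i‖ ^ p.toReal := by
      funext i
      rw [lp.coeFn_sub]
      rfl
    rw [hcongr] at hs
    refine hs.unique (hasSum_sum_of_ne_finset_zero fun i hi => ?_)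
    rw [hxF i hi, sub_zero, sub_self]
  have hBL : Tendsto (fun k => ‖u (ψ k) - x‖ ^ p.toReal - ‖u (ψ k)‖ ^ p.toReal) atTop
      (𝓝 (B ^ p.toReal - L ^ p.toReal)) :=
    (h2.rpow_const (Or.inr hpt.le)).sub (h1.rpow_const (Or.inr hpt.le))
  have hBL' : Tendsto (fun k => ∑ i : F,
      (‖(u (ψ k) : ∀ j, X j) i - (x : ∀ j, X j) i‖ ^ p.toReal
        - ‖(u (ψ k) : ∀ j, X j) i‖ ^ p.toReal)) atTop
      (𝓝 (B ^ p.toReal - L ^ p.toReal)) := by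
    refine hBL.congr fun k => ?_
    rw [hkey k, ← Finset.sum_coe_sort]
  have hsum : Tendsto (fun k => ∑ i : F,
      (‖(u (ψ k) : ∀ j, X j) i - (x : ∀ j, X j) i‖ ^ p.toReal
        - ‖(u (ψ k) : ∀ j, X j) i‖ ^ p.toReal)) atTop
      (𝓝 (∑ i : F, (c i ^ p.toReal - a i ^ p.toReal))) :=
    tendsto_finset_sum _ fun i _ =>
      ((h4 i).rpow_const (Or.inr hpt.le)).sub ((h3 i).rpow_const (Or.inr hpt.le))
  have hEq : B ^ p.toReal - L ^ p.toReal = ∑ i : F, (c i ^ p.toReal - a i ^ p.toReal) :=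
    tendsto_nhds_unique hBL' hsum
  have hnonneg : 0 ≤ B ^ p.toReal - L ^ p.toReal := by
    rw [hEq]
    exact Finset.sum_nonneg fun i _ =>
      sub_nonneg.2 (Real.rpow_le_rpow (ha0 i) (hac i) hpt.le)
  have hB0 : 0 ≤ B := ge_of_tendsto h2 (Eventually.of_forall fun k => norm_nonneg _)
  have hLB : L ≤ B := by
    by_contra hcon
    push_neg at hcon
    have := Real.rpow_lt_rpow hB0 hcon hpt
    linarith
  refine hLB.trans ?_
  -- B ≤ limsup ‖u n - x‖
  have hbb : IsBoundedUnder (· ≤ ·) atTop (fun n => ‖u n - x‖) :=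
    isBoundedUnder_of ⟨C + ‖x‖, fun n => (norm_sub_le _ _).trans (add_le_add_left (hC n) _)⟩
  refine le_of_forall_pos_le_add fun ε hε => ?_
  have hev : ∀ᶠ n in atTop, ‖u n - x‖ < limsup (fun n => ‖u n - x‖) atTop + ε :=
    eventually_lt_of_limsup_lt (lt_add_of_pos_right _ hε) hbb
  have hev' : ∀ᶠ k in atTop, ‖u (ψ k) - x‖ < limsup (fun n => ‖u n - x‖) atTop + ε :=
    hψ.tendsto_atTop.eventually hev
  exact le_of_tendsto h2 (hev'.mono fun k hk => hk.le)

end AuxOpial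

/-- The ℓᵖ-sum (`1 ≤ p < ∞`) of a family of Banach spaces with the nonstrict Opial property
has the nonstrict Opial property. -/
theorem statement14 (p : ℝ≥0∞) [Fact (1 ≤ p)] (hp : p ≠ ⊤) {I : Type*}
    (X : I → Type*) [∀ i, NormedAddCommGroup (X i)] [∀ i, NormedSpace ℝ (X i)]
    [∀ i, CompleteSpace (X i)]
    (hOp : ∀ i, ∀ u : ℕ → X i, WeaklyNull u → ∀ z : X i,
      limsup (fun n => ‖u n‖) atTop ≤ limsup (fun n => ‖u n - z‖) atTop)
    (u : ℕ → lp X p) (hu : WeaklyNull u) (x : lp X p) :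
    limsup (fun n => ‖u n‖) atTop ≤ limsup (fun n => ‖u n - x‖) atTop := by
  classical
  obtain ⟨C, hC⟩ := weaklyNull_bounded u hu
  have hb1 : IsBoundedUnder (· ≤ ·) atTop (fun n => ‖u n - x‖) :=
    isBoundedUnder_of ⟨C + ‖x‖, fun n => (norm_sub_le _ _).trans (add_le_add_left (hC n) _)⟩
  have hcob : IsCoboundedUnder (· ≤ ·) atTop (fun n => ‖u n - x‖) :=
    (isBoundedUnder_of ⟨0, fun n => norm_nonneg (u n - x)⟩ :
      IsBoundedUnder (· ≥ ·) atTop _).isCoboundedUnder_le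
  refine le_of_forall_pos_le_add fun ε hε => ?_
  obtain ⟨F, hF⟩ : ∃ F : Finset I, ‖(∑ i ∈ F, lp.single p i ((x : ∀ j, X j) i)) - x‖ < ε := by
    have hsingle := lp.hasSum_single hp x
    have h := Metric.tendsto_nhds.mp hsingle ε hε
    exact (h.mono fun s hs => by rwa [dist_eq_norm] at hs).exists
  set y : lp X p := ∑ i ∈ F, lp.single p i ((x : ∀ j, X j) i) with hy
  have hyF : ∀ i ∉ F, (y : ∀ j, X j) i = 0 := by
    intro i hi
    simp only [hy, lp.coeFn_sum, Finset.sum_apply, lp.single_apply, Finset.sum_dite_eq]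
    exact Finset.sum_eq_zero fun c hc => Pi.single_eq_of_ne (fun h : i = c => hi (h ▸ hc)) _
  have haux := aux_finsupp p hp X hOp u hu y F hyF
  have hptw : ∀ n, ‖u n - y‖ ≤ ‖u n - x‖ + ε := by
    intro n
    have hdecomp : u n - y = (u n - x) + (x - y) := by abel
    calc ‖u n - y‖ = ‖(u n - x) + (x - y)‖ := by rw [hdecomp]
      _ ≤ ‖u n - x‖ + ‖x - y‖ := norm_add_le _ _
      _ ≤ ‖u n - x‖ + ε := by
          refine add_le_add_right ?_ _
          rw [norm_sub_rev]
          exact hF.le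
  calc limsup (fun n => ‖u n‖) atTop ≤ limsup (fun n => ‖u n - y‖) atTop := haux
    _ ≤ limsup (fun n => ‖u n - x‖ + ε) atTop := by
        refine limsup_le_limsup (Eventually.of_forall hptw) ?_ ?_
        · exact (isBoundedUnder_of ⟨0, fun n => norm_nonneg (u n - y)⟩ :
            IsBoundedUnder (· ≥ ·) atTop _).isCoboundedUnder_le
        · exact isBoundedUnder_of ⟨C + ‖x‖ + ε, fun n =>
            add_le_add_left ((norm_sub_le _ _).trans (add_le_add_left (hC n) _)) _⟩
    _ = limsup (fun n => ‖u n - x‖) atTop + ε := limsup_add_const atTop _ ε hb1 hcob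
end

section
/- Let I be any index set and let (X_i)_{i∈I} be a family of real Banach spaces each having the nonstrict Opial property. Then the c0-sum X of (X_i)_{i∈I} has the nonstrict Opial property: for every weakly null sequence (x_n) in X and every x ∈ X, limsup_n ‖x_n‖_∞ ≤ limsup_n ‖x_n − x‖_∞. -/
open Filter Topology MeasureTheory
open scoped ENNReal ZeroAtInfty

section Aux15

variable {I : Type*} {X : I → Type*} [∀ i, NormedAddCommGroup (X i)]
    [∀ i, NormedSpace ℝ (X i)]

lemma aux15_weaklyNull_bounded {Y : Type*} [NormedAddCommGroup Y] [NormedSpace ℝ Y]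
    {u : ℕ → Y} (hu : WeaklyNull u) : ∃ C, ∀ n, ‖u n‖ ≤ C := by
  set J := NormedSpace.inclusionInDoubleDualLi ℝ (E := Y)
  have h : ∀ φ : StrongDual ℝ Y, ∃ C, ∀ n, ‖(J (u n)) φ‖ ≤ C := by
    intro φ
    obtain ⟨C, hC⟩ := (hu φ).norm.bddAbove_range
    exact ⟨C, fun n => hC (Set.mem_range_self n)⟩
  obtain ⟨C, hC⟩ := banach_steinhaus (g := fun n => (J (u n) : StrongDual ℝ Y →L[ℝ] ℝ)) h
  exact ⟨C, fun n => by simpa [J.norm_map] using hC n⟩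

/-- The coordinate evaluation map as a continuous linear map. -/
noncomputable def aux15_coord (i : I) : c0Sum X →L[ℝ] X i :=
  LinearMap.mkContinuous
    { toFun := fun f => ((f : lp X ∞) : ∀ j, X j) i
      map_add' := fun f g => by
        have : ((↑(f + g) : lp X ∞) : ∀ j, X j) = (f : lp X ∞) + (g : lp X ∞) := by
          rw [Submodule.coe_add, lp.coeFn_add]
        simp [this]
      map_smul' := fun c f => by
        have : ((↑(c • f) : lp X ∞) : ∀ j, X j) = c • ((f : lp X ∞) : ∀ j, X j) := by
          rw [Submodule.coe_smul, lp.coeFn_smul]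
        simp [this] }
    1 (fun f => by
      rw [one_mul]; exact lp.norm_apply_le_norm (ENNReal.top_ne_zero) (f : lp X ∞) i)

@[simp] lemma aux15_coord_apply (i : I) (f : c0Sum X) :
    aux15_coord i f = ((f : lp X ∞) : ∀ j, X j) i := rfl

lemma aux15_span_finite_support {f : lp X ∞}
    (hf : f ∈ Submodule.span ℝ { g : lp X ∞ | Set.Finite { i | (g : ∀ i, X i) i ≠ 0 } }) :
    Set.Finite { i | (f : ∀ i, X i) i ≠ 0 } := by
  induction hf using Submodule.span_induction with
  | mem g hg => exact hg
  | zero => simp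
  | add g h _ _ hg hh =>
    refine (hg.union hh).subset ?_
    intro i hi
    simp only [Set.mem_setOf_eq, lp.coeFn_add, Pi.add_apply] at hi ⊢
    by_contra hc
    simp only [Set.mem_union, Set.mem_setOf_eq, not_or, not_not] at hc
    exact hi (by rw [hc.1, hc.2, add_zero])
  | smul c g _ hg =>
    refine hg.subset ?_
    intro i hi
    simp only [Set.mem_setOf_eq, lp.coeFn_smul, Pi.smul_apply] at hi ⊢
    intro h0
    exact hi (by rw [h0, smul_zero])

end Aux15

/-- The c₀-sum of a family of Banach spaces with the nonstrict Opial property has the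
nonstrict Opial property. -/
theorem statement15 {I : Type*} (X : I → Type*) [∀ i, NormedAddCommGroup (X i)]
    [∀ i, NormedSpace ℝ (X i)] [∀ i, CompleteSpace (X i)]
    (hOp : ∀ i, ∀ u : ℕ → X i, WeaklyNull u → ∀ z : X i,
      limsup (fun n => ‖u n‖) atTop ≤ limsup (fun n => ‖u n - z‖) atTop)
    (u : ℕ → c0Sum X) (hu : WeaklyNull u) (x : c0Sum X) :
    limsup (fun n => ‖u n‖) atTop ≤ limsup (fun n => ‖u n - x‖) atTop := by
  -- helper: ε-argument
  have le_of_pos : ∀ a b : ℝ, (∀ ε : ℝ, 0 < ε → a ≤ b + ε) → a ≤ b := by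
    intro a b h
    by_contra hab
    push_neg at hab
    have := h ((a - b) / 2) (by linarith)
    linarith
  -- boundedness
  obtain ⟨C, hC⟩ := aux15_weaklyNull_bounded hu
  have hC0 : 0 ≤ C := le_trans (norm_nonneg _) (hC 0)
  -- cobounded helper
  have cobdd : ∀ f : ℕ → ℝ, (∀ n, 0 ≤ f n) → IsCoboundedUnder (· ≤ ·) atTop f := by
    intro f hf
    exact (isBoundedUnder_of ⟨0, fun n => hf n⟩ :
      IsBoundedUnder (· ≥ ·) atTop f).isCoboundedUnder_le
  have bdd : ∀ (z : c0Sum X), IsBoundedUnder (· ≤ ·) atTop (fun n => ‖u n - z‖) :=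
    fun z => isBoundedUnder_of ⟨C + ‖z‖, fun n =>
      (norm_sub_le _ _).trans (by linarith [hC n])⟩
  apply le_of_pos
  intro ε hε
  -- approximate x by a finitely supported y
  have hx : (x : lp X ∞) ∈ closure ((Submodule.span ℝ
      { f : lp X ∞ | Set.Finite { i | (f : ∀ i, X i) i ≠ 0 } } : Submodule ℝ (lp X ∞)) :
        Set (lp X ∞)) := x.2
  rw [Metric.mem_closure_iff] at hx
  obtain ⟨y, hy, hxy⟩ := hx (ε / 2) (by linarith)
  have hyc : y ∈ c0Sum X := Submodule.le_topologicalClosure _ hy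
  set Y : c0Sum X := ⟨y, hyc⟩ with hY
  have hxY : ‖x - Y‖ ≤ ε / 2 := by
    have : ‖(x : lp X ∞) - y‖ ≤ ε / 2 := by
      rw [← dist_eq_norm]; exact le_of_lt hxy
    simpa [hY] using this
  have hFfin : Set.Finite { i | (y : ∀ i, X i) i ≠ 0 } := aux15_span_finite_support hy
  set F := hFfin.toFinset with hF
  set M := limsup (fun n => ‖u n - Y‖) atTop with hM
  -- step 1 : limsup ‖u n‖ ≤ M
  have step1 : limsup (fun n => ‖u n‖) atTop ≤ M := by
    apply le_of_pos
    intro δ hδ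
    -- coordinates in F
    have hcoord : ∀ i ∈ F, limsup (fun n => ‖((u n : lp X ∞) : ∀ j, X j) i‖) atTop ≤ M := by
      intro i _
      have hwn : WeaklyNull (fun n => aux15_coord (X := X) i (u n)) := by
        intro φ
        exact hu (φ.comp (aux15_coord i))
      have h1 := hOp i _ hwn (((y : ∀ j, X j)) i)
      refine le_trans (le_trans (le_of_eq ?_) h1) ?_
      · rfl
      · refine limsup_le_limsup (Eventually.of_forall fun n => ?_) ?_ (bdd Y)
        · show ‖aux15_coord (X := X) i (u n) - (y : ∀ j, X j) i‖ ≤ ‖u n - Y‖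
          have : aux15_coord (X := X) i (u n) - (y : ∀ j, X j) i
              = ((((u n - Y) : c0Sum X) : lp X ∞) : ∀ j, X j) i := by
            simp [aux15_coord_apply, hY, lp.coeFn_sub]
          rw [this]
          exact lp.norm_apply_le_norm ENNReal.top_ne_zero (((u n - Y) : c0Sum X) : lp X ∞) i
        · exact cobdd _ fun n => norm_nonneg _
    -- eventual bounds
    have hev1 : ∀ᶠ n in atTop, ∀ i ∈ F, ‖((u n : lp X ∞) : ∀ j, X j) i‖ < M + δ := by
      rw [Filter.eventually_all_finset]
      intro i hi
      exact eventually_lt_of_limsup_lt (lt_of_le_of_lt (hcoord i hi) (by linarith))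
        (isBoundedUnder_of ⟨C, fun n =>
          le_trans (lp.norm_apply_le_norm ENNReal.top_ne_zero ((u n : lp X ∞)) i) (hC n)⟩)
    have hev2 : ∀ᶠ n in atTop, ‖u n - Y‖ < M + δ := by
      refine eventually_lt_of_limsup_lt ?_ (bdd Y)
      have : (0:ℝ) ≤ M := by
        refine le_limsup_of_frequently_le (Frequently.of_forall fun n => norm_nonneg _) (bdd Y)
      linarith
    have hev : ∀ᶠ n in atTop, ‖u n‖ ≤ M + δ := by
      filter_upwards [hev1, hev2] with n h1 h2
      have hM0 : (0:ℝ) ≤ M :=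
        le_limsup_of_frequently_le (Frequently.of_forall fun n => norm_nonneg _) (bdd Y)
      have : ‖(u n : lp X ∞)‖ ≤ M + δ := by
        refine lp.norm_le_of_forall_le (by linarith) fun i => ?_
        by_cases hi : i ∈ F
        · exact le_of_lt (h1 i hi)
        · have hyi : (y : ∀ j, X j) i = 0 := by
            by_contra hne
            exact hi (hFfin.mem_toFinset.mpr hne)
          have : ((u n : lp X ∞) : ∀ j, X j) i
              = ((((u n - Y) : c0Sum X) : lp X ∞) : ∀ j, X j) i := by
            simp [hY, lp.coeFn_sub, hyi]
          rw [this]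
          exact le_of_lt (lt_of_le_of_lt
            (lp.norm_apply_le_norm ENNReal.top_ne_zero (((u n - Y) : c0Sum X) : lp X ∞) i) h2)
      exact this
    exact limsup_le_of_le (cobdd _ fun n => norm_nonneg _) hev
  -- step 2 : M ≤ limsup ‖u n - x‖ + ε
  have step2 : M ≤ limsup (fun n => ‖u n - x‖) atTop + ε := by
    apply le_of_pos
    intro δ hδ
    have hev : ∀ᶠ n in atTop, ‖u n - x‖ < limsup (fun n => ‖u n - x‖) atTop + δ := by
      refine eventually_lt_of_limsup_lt ?_ (bdd x)
      linarith
    have hev' : ∀ᶠ n in atTop, ‖u n - Y‖ ≤ limsup (fun n => ‖u n - x‖) atTop + ε + δ := by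
      filter_upwards [hev] with n h
      have : ‖u n - Y‖ ≤ ‖u n - x‖ + ‖x - Y‖ := by
        have : u n - Y = (u n - x) + (x - Y) := by abel
        rw [this]; exact norm_add_le _ _
      linarith [hxY]
    have := limsup_le_of_le (cobdd _ fun n => norm_nonneg _) hev'
    rw [hM]
    linarith
  linarith [step1, step2]
end

section
/- Let (S,𝒜,μ) be a complete, finite measure space, 1 ≤ p < ∞ and X a real Banach space with the nonstrict Opial property. Let (f_n)_{n∈ℕ} be a bounded sequence in L^p(μ,X) such that for almost every t ∈ S the sequence (f_n(t))_{n∈ℕ} converges weakly to zero in X, and suppose there is a function g ∈ L^p(μ) such that ‖f_n(t)‖ → g(t) for almost every t ∈ S. Then for every f ∈ L^p(μ,X) and every measurable set A ∈ 𝒜, ∫_A liminf_n ‖f_n(t) − f(t)‖^p dμ(t) − ∫_A g(t)^p dμ(t) ≤ limsup_n ‖f_n − f‖_p^p − limsup_n ‖f_n‖_p^p. In particular, limsup_n ‖f_n‖_p ≤ limsup_n ‖f_n − f‖_p for every f ∈ L^p(μ,X). -/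
open Filter Topology MeasureTheory
open scoped ENNReal ZeroAtInfty

section Helpers

lemma my_exists_subseq_tendsto_liminf {a : ℕ → ℝ}
    (h1 : IsBoundedUnder (· ≤ ·) atTop a) (h2 : IsBoundedUnder (· ≥ ·) atTop a) :
    ∃ ψ : ℕ → ℕ, StrictMono ψ ∧ Tendsto (a ∘ ψ) atTop (𝓝 (liminf a atTop)) := by
  set L := liminf a atTop with hL
  have hfreq : ∀ j : ℕ, ∃ᶠ k in atTop, |a k - L| < 1 / (j + 1) := by
    intro j
    have hj : (0:ℝ) < 1 / (j + 1) := by positivity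
    have hev : ∀ᶠ k in atTop, L - 1 / (j + 1) < a k :=
      eventually_lt_of_lt_liminf (by linarith) h2
    have hfr : ∃ᶠ k in atTop, a k < L + 1 / (j + 1) :=
      frequently_lt_of_liminf_lt h1.isCoboundedUnder_ge (by linarith)
    refine (hfr.and_eventually hev).mono ?_
    intro k hk
    rw [abs_sub_lt_iff]
    constructor <;> linarith [hk.1, hk.2]
  obtain ⟨ψ, hψ, hP⟩ := extraction_forall_of_frequently hfreq
  refine ⟨ψ, hψ, ?_⟩
  rw [tendsto_iff_dist_tendsto_zero]
  refine squeeze_zero (fun j => dist_nonneg) (fun j => ?_)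
    tendsto_one_div_add_atTop_nhds_zero_nat
  rw [Real.dist_eq]
  exact (hP j).le

lemma my_core {p : ℝ} (hp : 0 ≤ p) {ε : ℝ} (hε : 0 < ε) :
    ∃ C : ℝ, 0 ≤ C ∧ ∀ u d : ℝ, 0 ≤ u → 0 ≤ d →
      (u + d) ^ p - u ^ p ≤ ε * u ^ p + C * d ^ p := by
  -- choose δ with (1+δ)^p ≤ 1 + ε
  obtain ⟨δ, hδ0, hδ⟩ : ∃ δ : ℝ, 0 < δ ∧ (1 + δ) ^ p ≤ 1 + ε := by
    have hcont : ContinuousAt (fun x : ℝ => (1 + x) ^ p) 0 := by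
      have h1 : ContinuousAt (fun x : ℝ => x ^ p) (1 + 0 : ℝ) :=
        Real.continuousAt_rpow_const _ _ (Or.inl (by norm_num))
      exact h1.comp (by fun_prop)
    have h0 : ((1:ℝ) + 0) ^ p = 1 := by simp [Real.one_rpow]
    have := hcont.tendsto
    rw [h0] at this
    have hev : ∀ᶠ x in 𝓝 (0:ℝ), (1 + x) ^ p < 1 + ε :=
      this.eventually_lt_const (by linarith)
    obtain ⟨δ, hδpos, hδ⟩ := Metric.eventually_nhds_iff.mp hev
    refine ⟨δ/2, by positivity, (hδ ?_).le⟩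
    rw [Real.dist_eq, sub_zero, abs_of_pos (by positivity)]
    linarith
  refine ⟨(1 + 1/δ) ^ p, Real.rpow_nonneg (by positivity) _, fun u d hu hd => ?_⟩
  have hCd : 0 ≤ (1 + 1/δ) ^ p * d ^ p := by positivity
  rcases le_or_gt d (δ * u) with hcase | hcase
  · have h1 : (u + d) ^ p ≤ (1 + δ) ^ p * u ^ p := by
      rw [← Real.mul_rpow (by positivity) hu]
      exact Real.rpow_le_rpow (by positivity) (by nlinarith) hp
    have h2 : (1 + δ) ^ p * u ^ p ≤ (1 + ε) * u ^ p := by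
      apply mul_le_mul_of_nonneg_right hδ (Real.rpow_nonneg hu _)
    nlinarith [Real.rpow_nonneg hu p]
  · have hud : u ≤ d / δ := by
      rw [le_div_iff₀ hδ0]; nlinarith
    have h1 : (u + d) ^ p ≤ (1 + 1/δ) ^ p * d ^ p := by
      rw [← Real.mul_rpow (by positivity) hd]
      have : u + d ≤ (1 + 1/δ) * d := by
        have : d / δ = (1/δ) * d := by ring
        nlinarith [hud, this]
      exact Real.rpow_le_rpow (by positivity) this hp
    have h3 : 0 ≤ ε * u ^ p := by positivity
    nlinarith [Real.rpow_nonneg hu p]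

-- Brezis-Lieb numeric lemma

lemma my_BL {p : ℝ} (hp : 0 ≤ p) {ε : ℝ} (hε : 0 < ε) :
    ∃ C : ℝ, 0 ≤ C ∧ ∀ u v : ℝ, 0 ≤ u → 0 ≤ v →
      |u ^ p - v ^ p| ≤ ε * u ^ p + C * |u - v| ^ p := by
  obtain ⟨C, hC0, hC⟩ := my_core hp hε
  refine ⟨C, hC0, fun u v hu hv => ?_⟩
  rcases le_total u v with h | h
  · have hd : v = u + (v - u) := by ring
    have h1 := hC u (v - u) hu (by linarith)
    rw [abs_of_nonpos (by nlinarith [Real.rpow_le_rpow hu h hp]), abs_of_nonpos (by linarith)]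
    calc -(u ^ p - v ^ p) = (u + (v - u)) ^ p - u ^ p := by rw [← hd]; ring
    _ ≤ ε * u ^ p + C * (v - u) ^ p := h1
    _ = ε * u ^ p + C * (-(u - v)) ^ p := by ring_nf
  · have h1 := hC v (u - v) hv (by linarith)
    rw [abs_of_nonneg (by nlinarith [Real.rpow_le_rpow hv h hp]), abs_of_nonneg (by linarith)]
    have h2 : ε * v ^ p ≤ ε * u ^ p :=
      mul_le_mul_of_nonneg_left (Real.rpow_le_rpow hv h hp) hε.le
    calc u ^ p - v ^ p = (v + (u - v)) ^ p - v ^ p := by ring_nf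
    _ ≤ ε * v ^ p + C * (u - v) ^ p := h1
    _ ≤ ε * u ^ p + C * (u - v) ^ p := by linarith

lemma my_opial_ptwise {X : Type*} [NormedAddCommGroup X] [NormedSpace ℝ X]
    (hOp : ∀ u : ℕ → X, (∀ φ : X →L[ℝ] ℝ, Tendsto (fun n => φ (u n)) atTop (𝓝 0)) → ∀ z : X,
      limsup (fun n => ‖u n‖) atTop ≤ limsup (fun n => ‖u n - z‖) atTop)
    (u : ℕ → X) (hu : ∀ φ : X →L[ℝ] ℝ, Tendsto (fun n => φ (u n)) atTop (𝓝 0))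
    (gt : ℝ) (hconv : Tendsto (fun n => ‖u n‖) atTop (𝓝 gt)) (z : X) :
    gt ≤ liminf (fun n => ‖u n - z‖) atTop := by
  have hbd : IsBoundedUnder (· ≤ ·) atTop (fun n => ‖u n - z‖) := by
    obtain ⟨M, hM⟩ := hconv.bddAbove_range
    refine isBoundedUnder_of ⟨M + ‖z‖, fun n => ?_⟩
    have : ‖u n‖ ≤ M := hM ⟨n, rfl⟩
    calc ‖u n - z‖ ≤ ‖u n‖ + ‖z‖ := norm_sub_le _ _
    _ ≤ M + ‖z‖ := by linarith
  have hbd2 : IsBoundedUnder (· ≥ ·) atTop (fun n => ‖u n - z‖) :=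
    isBoundedUnder_of ⟨0, fun n => norm_nonneg _⟩
  obtain ⟨ψ, hψ, hψt⟩ := my_exists_subseq_tendsto_liminf hbd hbd2
  have h1 : Tendsto (fun k => ‖u (ψ k)‖) atTop (𝓝 gt) :=
    hconv.comp hψ.tendsto_atTop
  have h2 := hOp (u ∘ ψ) (fun φ => (hu φ).comp hψ.tendsto_atTop) z
  rw [show (fun k => ‖(u ∘ ψ) k‖) = fun k => ‖u (ψ k)‖ from rfl] at h2
  rw [h1.limsup_eq] at h2
  rwa [show (fun k => ‖(u ∘ ψ) k - z‖) = (fun n => ‖u n - z‖) ∘ ψ from rfl,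
    hψt.limsup_eq] at h2

-- monotone map helper

lemma my_rpowM_mono {p : ℝ} (hp : 0 ≤ p) : Monotone (fun x : ℝ => max x 0 ^ p) :=
  fun x y hxy => Real.rpow_le_rpow (le_max_right _ _) (max_le_max hxy le_rfl) hp

lemma my_rpowM_cont {p : ℝ} (hp : 0 ≤ p) : Continuous (fun x : ℝ => max x 0 ^ p) := by
  rw [continuous_iff_continuousAt]
  intro x
  exact (Real.continuousAt_rpow_const _ _ (Or.inr hp)).comp (by fun_prop)

-- liminf of rpow of nonneg bounded sequence

lemma my_liminf_rpow {p : ℝ} (hp : 0 ≤ p) {a : ℕ → ℝ} (h0 : ∀ n, 0 ≤ a n)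
    (hb : IsBoundedUnder (· ≤ ·) atTop a) :
    (liminf a atTop) ^ p = liminf (fun n => a n ^ p) atTop := by
  have hbd2 : IsBoundedUnder (· ≥ ·) atTop a := isBoundedUnder_of ⟨0, h0⟩
  have hL0 : 0 ≤ liminf a atTop :=
    le_liminf_of_le hb.isCoboundedUnder_ge (Eventually.of_forall h0)
  have := (my_rpowM_mono hp).map_liminf_of_continuousAt a
    ((my_rpowM_cont hp).continuousAt) hb.isCoboundedUnder_ge hbd2
  rw [max_eq_left hL0] at this
  rw [this]
  congr 1
  funext n
  simp [max_eq_left (h0 n)]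

lemma my_limsup_rpow {p : ℝ} (hp : 0 ≤ p) {a : ℕ → ℝ} (h0 : ∀ n, 0 ≤ a n)
    (hb : IsBoundedUnder (· ≤ ·) atTop a) :
    (limsup a atTop) ^ p = limsup (fun n => a n ^ p) atTop := by
  have hbd2 : IsBoundedUnder (· ≥ ·) atTop a := isBoundedUnder_of ⟨0, h0⟩
  have hL0 : 0 ≤ limsup a atTop :=
    le_limsup_of_frequently_le (Eventually.of_forall h0).frequently hb
  have := (my_rpowM_mono hp).map_limsup_of_continuousAt a
    ((my_rpowM_cont hp).continuousAt) hb hbd2.isCoboundedUnder_le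
  rw [max_eq_left hL0] at this
  rw [this]
  congr 1
  funext n
  simp [max_eq_left (h0 n)]

lemma my_ofReal_liminf {a : ℕ → ℝ} (h0 : ∀ n, 0 ≤ a n)
    (hb : IsBoundedUnder (· ≤ ·) atTop a) :
    ENNReal.ofReal (liminf a atTop) = liminf (fun n => ENNReal.ofReal (a n)) atTop := by
  have hbd2 : IsBoundedUnder (· ≥ ·) atTop a := isBoundedUnder_of ⟨0, h0⟩
  have hmono : Monotone ENNReal.ofReal := fun _ _ h => ENNReal.ofReal_le_ofReal h
  exact hmono.map_liminf_of_continuousAt a ENNReal.continuous_ofReal.continuousAt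
    hb.isCoboundedUnder_ge hbd2


lemma my_int {S : Type*} [MeasurableSpace S] {μ : Measure S} {Y : Type*}
    [NormedAddCommGroup Y] {p : ℝ} (hp0 : 0 < p) {h : S → Y}
    (hh : MemLp h (ENNReal.ofReal p) μ) : Integrable (fun t => ‖h t‖ ^ p) μ := by
  have := hh.integrable_norm_rpow (by simp [ENNReal.ofReal_eq_zero]; linarith)
    ENNReal.ofReal_ne_top
  rwa [ENNReal.toReal_ofReal hp0.le] at this

end Helpers

set_option maxHeartbeats 1000000 in
/-- Opial-type inequality in Lebesgue–Bochner spaces `L^p(μ,X)` for a Banach space `X` with the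
nonstrict Opial property: for a bounded sequence `(f n)` in `L^p(μ,X)` converging weakly to `0`
pointwise a.e. and with `‖f n t‖ → g t` a.e., for every `f₀ ∈ L^p(μ,X)` and measurable `A`,
`∫_A liminf ‖f n - f₀‖^p dμ - ∫_A g^p dμ ≤ limsup ‖f n - f₀‖_p^p - limsup ‖f n‖_p^p`;
in particular `limsup ‖f n‖_p ≤ limsup ‖f n - f₀‖_p`. -/
theorem statement17 {S : Type*} [MeasurableSpace S] (μ : Measure S)
    [IsFiniteMeasure μ] [μ.IsComplete] (p : ℝ) (hp : 1 ≤ p)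
    (X : Type*) [NormedAddCommGroup X] [NormedSpace ℝ X] [CompleteSpace X]
    (hOp : ∀ u : ℕ → X, WeaklyNull u → ∀ z : X,
      limsup (fun n => ‖u n‖) atTop ≤ limsup (fun n => ‖u n - z‖) atTop)
    (f : ℕ → S → X) (hf : ∀ n, MemLp (f n) (ENNReal.ofReal p) μ)
    (hbdd : ∃ C : ℝ, ∀ n, (∫ t, ‖f n t‖ ^ p ∂μ) ≤ C)
    (hweak : ∀ᵐ t ∂μ, ∀ φ : X →L[ℝ] ℝ, Tendsto (fun n => φ (f n t)) atTop (𝓝 0))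
    (g : S → ℝ) (hg : MemLp g (ENNReal.ofReal p) μ)
    (hconv : ∀ᵐ t ∂μ, Tendsto (fun n => ‖f n t‖) atTop (𝓝 (g t))) :
    (∀ f₀ : S → X, MemLp f₀ (ENNReal.ofReal p) μ → ∀ A : Set S, MeasurableSet A →
      (∫ t in A, liminf (fun n => ‖f n t - f₀ t‖ ^ p) atTop ∂μ) - (∫ t in A, g t ^ p ∂μ) ≤
        limsup (fun n => ∫ t, ‖f n t - f₀ t‖ ^ p ∂μ) atTop -
          limsup (fun n => ∫ t, ‖f n t‖ ^ p ∂μ) atTop) ∧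
    (∀ f₀ : S → X, MemLp f₀ (ENNReal.ofReal p) μ →
      limsup (fun n => (∫ t, ‖f n t‖ ^ p ∂μ) ^ (1 / p)) atTop ≤
        limsup (fun n => (∫ t, ‖f n t - f₀ t‖ ^ p ∂μ) ^ (1 / p)) atTop) := by
  have hOp := fun (u : ℕ → X) (hu : WeaklyNull u) => hOp u hu
  have hp0 : (0:ℝ) < p := lt_of_lt_of_le one_pos hp
  have hPne : ENNReal.ofReal p ≠ 0 := by
    simp [ENNReal.ofReal_eq_zero]; linarith
  have hPtop : ENNReal.ofReal p ≠ ⊤ := ENNReal.ofReal_ne_top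
  have hPto : (ENNReal.ofReal p).toReal = p := ENNReal.toReal_ofReal hp0.le
  obtain ⟨Cb, hCb⟩ := hbdd
  set b : ℕ → ℝ := fun n => ∫ t, ‖f n t‖ ^ p ∂μ with hbdef
  have hbint : ∀ n, Integrable (fun t => ‖f n t‖ ^ p) μ := fun n => my_int hp0 (hf n)
  have hb0 : ∀ n, 0 ≤ b n := fun n =>
    integral_nonneg fun t => Real.rpow_nonneg (norm_nonneg _) _
  -- a.e. nonnegativity of g
  have hg0 : ∀ᵐ t ∂μ, 0 ≤ g t := by
    filter_upwards [hconv] with t ht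
    exact le_of_tendsto_of_tendsto' tendsto_const_nhds ht fun n => norm_nonneg _
  have hgpint : Integrable (fun t => g t ^ p) μ := by
    refine (my_int hp0 hg).congr ?_
    filter_upwards [hg0] with t ht
    rw [Real.norm_of_nonneg ht]
  have hgpnn : 0 ≤ ∫ t, g t ^ p ∂μ :=
    integral_nonneg_of_ae <| by
      filter_upwards [hg0] with t ht; exact Real.rpow_nonneg ht _
  -- the key part 1
  have key : ∀ f₀ : S → X, MemLp f₀ (ENNReal.ofReal p) μ → ∀ A : Set S, MeasurableSet A →
      (∫ t in A, liminf (fun n => ‖f n t - f₀ t‖ ^ p) atTop ∂μ) - (∫ t in A, g t ^ p ∂μ) ≤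
        limsup (fun n => ∫ t, ‖f n t - f₀ t‖ ^ p ∂μ) atTop -
          limsup (fun n => ∫ t, ‖f n t‖ ^ p ∂μ) atTop := by
    intro f₀ hf₀ A hA
    set a : ℕ → ℝ := fun n => ∫ t, ‖f n t - f₀ t‖ ^ p ∂μ with hadef
    have haint : ∀ n, Integrable (fun t => ‖f n t - f₀ t‖ ^ p) μ := fun n =>
      my_int hp0 ((hf n).sub hf₀)
    have hf₀int : Integrable (fun t => ‖f₀ t‖ ^ p) μ := my_int hp0 hf₀
    set I₀ : ℝ := ∫ t, ‖f₀ t‖ ^ p ∂μ with hI₀def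
    have hI₀0 : 0 ≤ I₀ := integral_nonneg fun t => Real.rpow_nonneg (norm_nonneg _) _
    have ha0 : ∀ n, 0 ≤ a n := fun n =>
      integral_nonneg fun t => Real.rpow_nonneg (norm_nonneg _) _
    -- pointwise: |‖f n t‖ - ‖f n t - f₀ t‖| ^ p ≤ ‖f₀ t‖ ^ p
    have hqle : ∀ n t, |‖f n t‖ - ‖f n t - f₀ t‖| ^ p ≤ ‖f₀ t‖ ^ p := by
      intro n t
      refine Real.rpow_le_rpow (abs_nonneg _) ?_ hp0.le
      have := abs_norm_sub_norm_le (f n t) (f n t - f₀ t)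
      simpa using this
    -- bound on a
    obtain ⟨C₁, hC₁0, hC₁⟩ := my_BL hp0.le one_pos
    have habd : ∀ n, a n ≤ 2 * Cb + C₁ * I₀ := by
      intro n
      have h1 : a n ≤ 2 * b n + C₁ * I₀ := by
        have : ∫ t, ‖f n t - f₀ t‖ ^ p ∂μ ≤
            ∫ t, 2 * ‖f n t‖ ^ p + C₁ * ‖f₀ t‖ ^ p ∂μ := by
          refine integral_mono (haint n) (((hbint n).const_mul 2).add
            (hf₀int.const_mul C₁)) fun t => ?_
          have h2 := hC₁ (‖f n t‖) (‖f n t - f₀ t‖) (norm_nonneg _) (norm_nonneg _)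
          have h3 := hqle n t
          have h4 : C₁ * |‖f n t‖ - ‖f n t - f₀ t‖| ^ p ≤ C₁ * ‖f₀ t‖ ^ p :=
            mul_le_mul_of_nonneg_left h3 hC₁0
          have h5 := abs_le.mp h2
          simp only [Pi.add_apply]
          nlinarith [h5.1, h5.2]
        rw [integral_add ((hbint n).const_mul 2) (hf₀int.const_mul C₁),
          integral_const_mul, integral_const_mul] at this
        exact this
      have := hCb n
      nlinarith [hb0 n]
    set Ca : ℝ := 2 * Cb + C₁ * I₀ with hCadef
    -- measurable versions
    set f' : ℕ → S → X := fun n => ((hf n).1).mk (f n) with hf'def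
    have hf'meas : ∀ n, StronglyMeasurable (f' n) := fun n => (hf n).1.stronglyMeasurable_mk
    set f₀' : S → X := (hf₀.1).mk f₀ with hf₀'def
    have hf₀'meas : StronglyMeasurable f₀' := hf₀.1.stronglyMeasurable_mk
    have hf'ae : ∀ᵐ t ∂μ, ∀ n, f n t = f' n t := ae_all_iff.2 fun n => (hf n).1.ae_eq_mk
    have hf₀'ae : ∀ᵐ t ∂μ, f₀ t = f₀' t := hf₀.1.ae_eq_mk
    set ℓ : S → ℝ := fun t => liminf (fun n => ‖f' n t - f₀' t‖ ^ p) atTop with hℓdef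
    have hℓmeas : Measurable ℓ := by
      apply Measurable.liminf
      intro n
      exact (((hf'meas n).sub hf₀'meas).norm.measurable).pow_const _
    -- combined pointwise a.e. facts
    have hptw : ∀ᵐ t ∂μ,
        ((fun n => ‖f n t - f₀ t‖ ^ p) = fun n => ‖f' n t - f₀' t‖ ^ p) ∧
        g t ^ p ≤ ℓ t ∧
        (∃ M : ℝ, ∀ n, ‖f n t - f₀ t‖ ^ p ≤ M) ∧
        Tendsto (fun n => ‖f n t‖ ^ p) atTop (𝓝 (g t ^ p)) ∧ 0 ≤ g t := by
      filter_upwards [hweak, hconv, hf'ae, hf₀'ae, hg0] with t hw hc hfe hf0e hg0t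
      have hqeq : (fun n => ‖f n t - f₀ t‖ ^ p) = fun n => ‖f' n t - f₀' t‖ ^ p :=
        funext fun n => by rw [hfe n, hf0e]
      obtain ⟨M, hM⟩ := hc.bddAbove_range
      have hMn : ∀ n, ‖f n t‖ ≤ M := fun n => hM ⟨n, rfl⟩
      have hqbd : ∀ n, ‖f n t - f₀ t‖ ≤ M + ‖f₀ t‖ := fun n => by
        calc ‖f n t - f₀ t‖ ≤ ‖f n t‖ + ‖f₀ t‖ := norm_sub_le _ _
        _ ≤ M + ‖f₀ t‖ := by linarith [hMn n]
      have hqpbd : ∀ n, ‖f n t - f₀ t‖ ^ p ≤ (M + ‖f₀ t‖) ^ p := fun n =>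
        Real.rpow_le_rpow (norm_nonneg _) (hqbd n) hp0.le
      have hgl : g t ≤ liminf (fun n => ‖f n t - f₀ t‖) atTop :=
        my_opial_ptwise hOp (fun n => f n t) hw (g t) hc (f₀ t)
      have hgpl : g t ^ p ≤ ℓ t := by
        have h1 : g t ^ p ≤ (liminf (fun n => ‖f n t - f₀ t‖) atTop) ^ p :=
          Real.rpow_le_rpow hg0t hgl hp0.le
        rw [my_liminf_rpow hp0.le (fun n => norm_nonneg _)
          (isBoundedUnder_of ⟨M + ‖f₀ t‖, hqbd⟩)] at h1
        rwa [hqeq] at h1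
      exact ⟨hqeq, hgpl, ⟨(M + ‖f₀ t‖) ^ p, hqpbd⟩,
        hc.rpow_const (Or.inr hp0.le), hg0t⟩
    have hℓnn : ∀ᵐ t ∂μ, 0 ≤ ℓ t := by
      filter_upwards [hptw] with t ht
      exact le_trans (Real.rpow_nonneg ht.2.2.2.2 p) ht.2.1
    -- integrability of ℓ
    have hq'meas : ∀ n, Measurable fun t => ‖f' n t - f₀' t‖ ^ p := fun n =>
      (((hf'meas n).sub hf₀'meas).norm.measurable).pow_const _
    have hℓae : ∀ᵐ t ∂μ, ENNReal.ofReal (ℓ t) ≤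
        liminf (fun n => ENNReal.ofReal (‖f' n t - f₀' t‖ ^ p)) atTop := by
      filter_upwards [hptw] with t ht
      obtain ⟨M, hM⟩ := ht.2.2.1
      have h0 : ∀ n, 0 ≤ ‖f' n t - f₀' t‖ ^ p := fun n => Real.rpow_nonneg (norm_nonneg _) _
      have hbd : IsBoundedUnder (· ≤ ·) atTop (fun n => ‖f' n t - f₀' t‖ ^ p) := by
        rw [← ht.1]; exact isBoundedUnder_of ⟨M, hM⟩
      exact (my_ofReal_liminf h0 hbd).le
    have hq'ae : ∀ n, (fun t => ‖f' n t - f₀' t‖ ^ p) =ᵐ[μ] fun t => ‖f n t - f₀ t‖ ^ p := by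
      intro n
      filter_upwards [hf'ae, hf₀'ae] with t h1 h2
      rw [h1 n, h2]
    have hℓlintle : ∫⁻ t, ENNReal.ofReal (ℓ t) ∂μ ≤ ENNReal.ofReal Ca := by
      calc ∫⁻ t, ENNReal.ofReal (ℓ t) ∂μ
          ≤ ∫⁻ t, liminf (fun n => ENNReal.ofReal (‖f' n t - f₀' t‖ ^ p)) atTop ∂μ :=
            lintegral_mono_ae hℓae
        _ ≤ liminf (fun n => ∫⁻ t, ENNReal.ofReal (‖f' n t - f₀' t‖ ^ p) ∂μ) atTop :=
            lintegral_liminf_le fun n => (hq'meas n).ennreal_ofReal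
        _ ≤ ENNReal.ofReal Ca := by
            have hterm : ∀ n, ∫⁻ t, ENNReal.ofReal (‖f' n t - f₀' t‖ ^ p) ∂μ ≤
                ENNReal.ofReal Ca := by
              intro n
              rw [lintegral_congr_ae ((hq'ae n).mono fun t ht =>
                  congrArg ENNReal.ofReal ht),
                ← ofReal_integral_eq_lintegral_ofReal (haint n)
                  (Eventually.of_forall fun t => Real.rpow_nonneg (norm_nonneg _) _)]
              exact ENNReal.ofReal_le_ofReal (habd n)
            calc liminf (fun n => ∫⁻ t, ENNReal.ofReal (‖f' n t - f₀' t‖ ^ p) ∂μ) atTop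
                ≤ liminf (fun _ : ℕ => ENNReal.ofReal Ca) atTop :=
                  liminf_le_liminf (Eventually.of_forall hterm)
              _ = ENNReal.ofReal Ca := liminf_const _
    have hℓint : Integrable ℓ μ := by
      refine ⟨hℓmeas.aestronglyMeasurable, ?_⟩
      rw [hasFiniteIntegral_def]
      have heq : ∫⁻ t, ‖ℓ t‖ₑ ∂μ = ∫⁻ t, ENNReal.ofReal (ℓ t) ∂μ :=
        lintegral_congr_ae (hℓnn.mono fun t ht => Real.enorm_eq_ofReal ht)
      rw [heq]
      exact lt_of_le_of_lt hℓlintle ENNReal.ofReal_lt_top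
    -- the ε-argument
    have main : ∀ ε : ℝ, 0 < ε → ε ≤ 1 →
        (∫ t, ℓ t ∂μ) - (∫ t, g t ^ p ∂μ) ≤
          liminf (fun n => a n - b n) atTop + ε * (Cb - ∫ t, g t ^ p ∂μ) := by
      intro ε hε hε1
      obtain ⟨C, hC0, hC⟩ := my_BL hp0.le hε
      set F : ℕ → S → ℝ := fun n t =>
        ‖f n t - f₀ t‖ ^ p + ((ε - 1) * ‖f n t‖ ^ p + C * ‖f₀ t‖ ^ p) with hFdef
      have hFint : ∀ n, Integrable (F n) μ := fun n =>
        (haint n).add (((hbint n).const_mul _).add (hf₀int.const_mul _))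
      have hF0 : ∀ n t, 0 ≤ F n t := by
        intro n t
        have h2 := hC (‖f n t‖) (‖f n t - f₀ t‖) (norm_nonneg _) (norm_nonneg _)
        have h4 := abs_le.mp h2
        have h5 : C * |‖f n t‖ - ‖f n t - f₀ t‖| ^ p ≤ C * ‖f₀ t‖ ^ p :=
          mul_le_mul_of_nonneg_left (hqle n t) hC0
        simp only [hFdef]
        nlinarith [h4.1, h4.2]
      have hIF : ∀ n, ∫ t, F n t ∂μ = a n + ((ε - 1) * b n + C * I₀) := by
        intro n
        simp only [hFdef]
        have h1 : Integrable (fun t => (ε - 1) * ‖f n t‖ ^ p) μ := (hbint n).const_mul _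
        have h2 : Integrable (fun t => C * ‖f₀ t‖ ^ p) μ := hf₀int.const_mul _
        have h3 : Integrable (fun t => (ε - 1) * ‖f n t‖ ^ p + C * ‖f₀ t‖ ^ p) μ := h1.add h2
        rw [integral_add (haint n) h3, integral_add h1 h2,
          integral_const_mul, integral_const_mul]
      have hIF0 : ∀ n, 0 ≤ ∫ t, F n t ∂μ := fun n => integral_nonneg (hF0 n)
      have hIFbd : ∀ n, ∫ t, F n t ∂μ ≤ Ca + C * I₀ := by
        intro n
        rw [hIF n]
        nlinarith [habd n, hb0 n]
      set G : S → ℝ := fun t => ℓ t + ((ε - 1) * g t ^ p + C * ‖f₀ t‖ ^ p) with hGdef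
      have hGint : Integrable G μ :=
        hℓint.add ((hgpint.const_mul _).add (hf₀int.const_mul _))
      have hG0 : 0 ≤ᵐ[μ] G := by
        filter_upwards [hptw] with t ht
        have h1 : 0 ≤ g t ^ p := Real.rpow_nonneg ht.2.2.2.2 _
        have h2 : 0 ≤ ‖f₀ t‖ ^ p := Real.rpow_nonneg (norm_nonneg _) _
        have h3 := ht.2.1
        simp only [hGdef, Pi.zero_apply]
        nlinarith
      have hGle : ∀ᵐ t ∂μ, ENNReal.ofReal (G t) ≤
          liminf (fun n => ENNReal.ofReal (F n t)) atTop := by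
        filter_upwards [hptw] with t ht
        obtain ⟨heq, hgp, ⟨M, hM⟩, htend, hg0t⟩ := ht
        have hv : Tendsto (fun n => (ε - 1) * ‖f n t‖ ^ p + C * ‖f₀ t‖ ^ p) atTop
            (𝓝 ((ε - 1) * g t ^ p + C * ‖f₀ t‖ ^ p)) :=
          Tendsto.add_const _ (htend.const_mul _)
        have hu1 : IsBoundedUnder (· ≥ ·) atTop (fun n => ‖f n t - f₀ t‖ ^ p) :=
          isBoundedUnder_of ⟨0, fun n => Real.rpow_nonneg (norm_nonneg _) _⟩
        have hu2 : IsBoundedUnder (· ≤ ·) atTop (fun n => ‖f n t - f₀ t‖ ^ p) :=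
          isBoundedUnder_of ⟨M, hM⟩
        have h1 : G t ≤ liminf (fun n => F n t) atTop := by
          have hadd := le_liminf_add hu1 hu2 hv.isBoundedUnder_ge
            hv.isBoundedUnder_le.isCoboundedUnder_ge
          rw [hv.liminf_eq] at hadd
          have hℓt : ℓ t = liminf (fun n => ‖f n t - f₀ t‖ ^ p) atTop := by
            rw [hℓdef]; simp only []; rw [← heq]
          calc G t = liminf (fun n => ‖f n t - f₀ t‖ ^ p) atTop +
              ((ε - 1) * g t ^ p + C * ‖f₀ t‖ ^ p) := by rw [hGdef]; simp only []; rw [hℓt]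
          _ ≤ liminf ((fun n => ‖f n t - f₀ t‖ ^ p) +
              fun n => (ε - 1) * ‖f n t‖ ^ p + C * ‖f₀ t‖ ^ p) atTop := hadd
          _ = liminf (fun n => F n t) atTop := rfl
        have hFbd : IsBoundedUnder (· ≤ ·) atTop (fun n => F n t) := by
          refine isBoundedUnder_of ⟨M + C * ‖f₀ t‖ ^ p, fun n => ?_⟩
          have h2 : (ε - 1) * ‖f n t‖ ^ p ≤ 0 :=
            mul_nonpos_of_nonpos_of_nonneg (by linarith)
              (Real.rpow_nonneg (norm_nonneg _) _)
          have := hM n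
          simp only [hFdef]
          nlinarith
        calc ENNReal.ofReal (G t) ≤ ENNReal.ofReal (liminf (fun n => F n t) atTop) :=
            ENNReal.ofReal_le_ofReal h1
        _ = liminf (fun n => ENNReal.ofReal (F n t)) atTop :=
            my_ofReal_liminf (fun n => hF0 n t) hFbd
      have hfatou : ENNReal.ofReal (∫ t, G t ∂μ) ≤
          ENNReal.ofReal (liminf (fun n => ∫ t, F n t ∂μ) atTop) := by
        calc ENNReal.ofReal (∫ t, G t ∂μ) = ∫⁻ t, ENNReal.ofReal (G t) ∂μ :=
            ofReal_integral_eq_lintegral_ofReal hGint hG0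
        _ ≤ ∫⁻ t, liminf (fun n => ENNReal.ofReal (F n t)) atTop ∂μ :=
            lintegral_mono_ae hGle
        _ ≤ liminf (fun n => ∫⁻ t, ENNReal.ofReal (F n t) ∂μ) atTop :=
            lintegral_liminf_le' fun n => (hFint n).aemeasurable.ennreal_ofReal
        _ = liminf (fun n => ENNReal.ofReal (∫ t, F n t ∂μ)) atTop := by
            congr 1
            funext n
            rw [ofReal_integral_eq_lintegral_ofReal (hFint n)
              (Eventually.of_forall (hF0 n))]
        _ = ENNReal.ofReal (liminf (fun n => ∫ t, F n t ∂μ) atTop) :=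
            (my_ofReal_liminf hIF0 (isBoundedUnder_of ⟨_, hIFbd⟩)).symm
      have h7 : ∫ t, G t ∂μ ≤ liminf (fun n => ∫ t, F n t ∂μ) atTop := by
        have hnn : (0:ℝ) ≤ liminf (fun n => ∫ t, F n t ∂μ) atTop :=
          le_liminf_of_le (isBoundedUnder_of ⟨_, hIFbd⟩).isCoboundedUnder_ge
            (Eventually.of_forall hIF0)
        exact (ENNReal.ofReal_le_ofReal_iff hnn).mp hfatou
      have hIG : ∫ t, G t ∂μ =
          (∫ t, ℓ t ∂μ) + ((ε - 1) * (∫ t, g t ^ p ∂μ) + C * I₀) := by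
        simp only [hGdef]
        have h1 : Integrable (fun t => (ε - 1) * g t ^ p) μ := hgpint.const_mul _
        have h2 : Integrable (fun t => C * ‖f₀ t‖ ^ p) μ := hf₀int.const_mul _
        have h3 : Integrable (fun t => (ε - 1) * g t ^ p + C * ‖f₀ t‖ ^ p) μ := h1.add h2
        rw [integral_add hℓint h3, integral_add h1 h2,
          integral_const_mul, integral_const_mul]
      have h8 : liminf (fun n => ∫ t, F n t ∂μ) atTop ≤
          (ε * Cb + C * I₀) + liminf (fun n => a n - b n) atTop := by
        have heqF : (fun n => ∫ t, F n t ∂μ) =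
            (fun n => ε * b n + C * I₀) + fun n => a n - b n := by
          funext n
          simp only [Pi.add_apply]
          rw [hIF n]; ring
        rw [heqF]
        have hw1 : IsBoundedUnder (· ≥ ·) atTop (fun n => ε * b n + C * I₀) :=
          isBoundedUnder_of ⟨0, fun n => by nlinarith [hb0 n]⟩
        have hw2 : IsBoundedUnder (· ≤ ·) atTop (fun n => ε * b n + C * I₀) :=
          isBoundedUnder_of ⟨ε * Cb + C * I₀, fun n => by nlinarith [hCb n]⟩
        have hv1 : IsBoundedUnder (· ≥ ·) atTop (fun n => a n - b n) :=
          isBoundedUnder_of ⟨-Cb, fun n => by linarith [ha0 n, hCb n]⟩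
        have hv2 : IsBoundedUnder (· ≤ ·) atTop (fun n => a n - b n) :=
          isBoundedUnder_of ⟨Ca, fun n => by linarith [habd n, hb0 n]⟩
        have hadd := liminf_add_le hw1 hw2 hv1 hv2.isCoboundedUnder_ge
        refine le_trans hadd (add_le_add_left ?_ _)
        exact limsup_le_of_le hw1.isCoboundedUnder_le
          (Eventually.of_forall fun n => by nlinarith [hCb n])
      rw [hIG] at h7
      linarith
    -- conclude the liminf bound by letting ε → 0
    have hεconc : (∫ t, ℓ t ∂μ) - (∫ t, g t ^ p ∂μ) ≤
        liminf (fun n => a n - b n) atTop := by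
      set L := liminf (fun n => a n - b n) atTop with hL
      set K := Cb - ∫ t, g t ^ p ∂μ with hK
      by_contra hcon
      push_neg at hcon
      set δ := ((∫ t, ℓ t ∂μ) - (∫ t, g t ^ p ∂μ) - L) / 2 with hδ
      have hδ0 : 0 < δ := by rw [hδ]; linarith
      rcases le_or_gt K 0 with hKle | hKpos
      · have h1 := main 1 one_pos le_rfl
        linarith
      · have hε2 : 0 < min 1 (δ / K) := lt_min one_pos (by positivity)
        have h1 := main (min 1 (δ / K)) hε2 (min_le_left _ _)
        have h2 : min 1 (δ / K) * K ≤ (δ / K) * K :=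
          mul_le_mul_of_nonneg_right (min_le_right _ _) hKpos.le
        rw [div_mul_cancel₀ _ hKpos.ne'] at h2
        linarith
    -- relate liminf of difference with difference of limsups
    have final1 : liminf (fun n => a n - b n) atTop ≤
        limsup a atTop - limsup b atTop := by
      have hb1 : IsBoundedUnder (· ≤ ·) atTop b := isBoundedUnder_of ⟨Cb, hCb⟩
      have hb2 : IsBoundedUnder (· ≥ ·) atTop b := isBoundedUnder_of ⟨0, hb0⟩
      have hv1 : IsBoundedUnder (· ≥ ·) atTop (fun n => a n - b n) :=
        isBoundedUnder_of ⟨-Cb, fun n => by linarith [ha0 n, hCb n]⟩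
      have hv2 : IsBoundedUnder (· ≤ ·) atTop (fun n => a n - b n) :=
        isBoundedUnder_of ⟨Ca, fun n => by linarith [habd n, hb0 n]⟩
      have hadd := le_limsup_add hb1 hb2.isCoboundedUnder_le hv2 hv1
      rw [show (b + fun n => a n - b n) = a from funext fun n => by
        simp only [Pi.add_apply]; ring] at hadd
      linarith
    -- set splitting
    have hLHS : ∫ t in A, liminf (fun n => ‖f n t - f₀ t‖ ^ p) atTop ∂μ
        = ∫ t in A, ℓ t ∂μ := by
      refine integral_congr_ae (ae_restrict_of_ae ?_)
      filter_upwards [hptw] with t ht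
      rw [ht.1]
    have hsplit : (∫ t in A, ℓ t ∂μ) + (∫ t in Aᶜ, ℓ t ∂μ) = ∫ t, ℓ t ∂μ :=
      integral_add_compl hA hℓint
    have hsplitg : (∫ t in A, g t ^ p ∂μ) + (∫ t in Aᶜ, g t ^ p ∂μ)
        = ∫ t, g t ^ p ∂μ := integral_add_compl hA hgpint
    have hcompl : (∫ t in Aᶜ, g t ^ p ∂μ) ≤ ∫ t in Aᶜ, ℓ t ∂μ :=
      integral_mono_ae hgpint.integrableOn hℓint.integrableOn
        (ae_restrict_of_ae (hptw.mono fun t ht => ht.2.1))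
    rw [hLHS]
    linarith

  refine ⟨key, ?_⟩
  -- part 2
  intro f₀ hf₀
  have h := key f₀ hf₀ ∅ MeasurableSet.empty
  rw [Measure.restrict_empty, integral_zero_measure, integral_zero_measure] at h
  set a : ℕ → ℝ := fun n => ∫ t, ‖f n t - f₀ t‖ ^ p ∂μ with hadef
  have hba : limsup b atTop ≤ limsup a atTop := by linarith
  -- bounds
  obtain ⟨C₁, hC₁0, hC₁⟩ := my_BL hp0.le one_pos
  have haint : ∀ n, Integrable (fun t => ‖f n t - f₀ t‖ ^ p) μ := fun n =>
    my_int hp0 ((hf n).sub hf₀)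
  have hf₀int : Integrable (fun t => ‖f₀ t‖ ^ p) μ := my_int hp0 hf₀
  have ha0 : ∀ n, 0 ≤ a n := fun n =>
    integral_nonneg fun t => Real.rpow_nonneg (norm_nonneg _) _
  have hbint : ∀ n, Integrable (fun t => ‖f n t‖ ^ p) μ := fun n => my_int hp0 (hf n)
  have habd : ∀ n, a n ≤ 2 * Cb + C₁ * (∫ t, ‖f₀ t‖ ^ p ∂μ) := by
    intro n
    have hq : ∫ t, ‖f n t - f₀ t‖ ^ p ∂μ ≤
        ∫ t, 2 * ‖f n t‖ ^ p + C₁ * ‖f₀ t‖ ^ p ∂μ := by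
      refine integral_mono (haint n) (((hbint n).const_mul 2).add
        (hf₀int.const_mul C₁)) fun t => ?_
      have h2 := hC₁ (‖f n t‖) (‖f n t - f₀ t‖) (norm_nonneg _) (norm_nonneg _)
      have h3 : |‖f n t‖ - ‖f n t - f₀ t‖| ^ p ≤ ‖f₀ t‖ ^ p := by
        refine Real.rpow_le_rpow (abs_nonneg _) ?_ hp0.le
        have := abs_norm_sub_norm_le (f n t) (f n t - f₀ t)
        simpa using this
      have h4 : C₁ * |‖f n t‖ - ‖f n t - f₀ t‖| ^ p ≤ C₁ * ‖f₀ t‖ ^ p :=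
        mul_le_mul_of_nonneg_left h3 hC₁0
      have h5 := abs_le.mp h2
      simp only [Pi.add_apply]
      nlinarith [h5.1, h5.2]
    rw [integral_add ((hbint n).const_mul 2) (hf₀int.const_mul C₁),
      integral_const_mul, integral_const_mul] at hq
    have h6 := hCb n
    have h7 : (0:ℝ) ≤ ∫ t, ‖f n t‖ ^ p ∂μ :=
      integral_nonneg fun t => Real.rpow_nonneg (norm_nonneg _) _
    show (∫ t, ‖f n t - f₀ t‖ ^ p ∂μ) ≤ _
    nlinarith
  have hbbd : IsBoundedUnder (· ≤ ·) atTop b := isBoundedUnder_of ⟨Cb, hCb⟩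
  have habdd : IsBoundedUnder (· ≤ ·) atTop a := isBoundedUnder_of ⟨_, habd⟩
  rw [← my_limsup_rpow (by positivity : (0:ℝ) ≤ 1/p) hb0 hbbd,
    ← my_limsup_rpow (by positivity : (0:ℝ) ≤ 1/p) ha0 habdd]
  refine Real.rpow_le_rpow ?_ hba (by positivity)
  exact le_limsup_of_frequently_le (Eventually.of_forall hb0).frequently hbbd
end

section
/- Let (S,𝒜,μ) be a complete, finite measure space, 1 ≤ p < ∞ and X a real Banach space with the uniform Opial property. Let M, R > 0 and f ∈ L^p(μ,X) with f ≠ 0. Then there exists η > 0 such that the following holds: whenever (f_n)_{n∈ℕ} is a sequence in L^p(μ,X) with sup_n ‖f_n‖_p ≤ R such that for almost every t ∈ S the sequence (f_n(t))_{n∈ℕ} converges weakly to zero in X and the limit lim_n ‖f_n(t)‖ exists and is at most M, then limsup_n ‖f_n‖_p + η ≤ limsup_n ‖f_n − f‖_p. -/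
open Filter Topology MeasureTheory
open scoped ENNReal ZeroAtInfty

section Helpers

variable {S : Type*} [MeasurableSpace S] {X : Type*} [NormedAddCommGroup X]

lemma st19_cont_rpow {p : ℝ} (hp0 : 0 < p) : Continuous fun x : ℝ => x ^ p :=
  continuous_iff_continuousAt.2 fun x => Real.continuousAt_rpow_const x p (Or.inr hp0.le)

lemma st19_int_eq {p : ℝ} (hp0 : 0 < p) {ν : Measure S} {h : S → X}
    (hm : AEStronglyMeasurable h ν) :
    ∫ t, ‖h t‖ ^ p ∂ν = (∫⁻ t, ENNReal.ofReal (‖h t‖ ^ p) ∂ν).toReal :=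
  integral_eq_lintegral_of_nonneg_ae
    (Filter.Eventually.of_forall fun t => Real.rpow_nonneg (norm_nonneg _) p)
    ((st19_cont_rpow hp0).comp_aestronglyMeasurable hm.norm)

lemma st19_int_nonneg (p : ℝ) (ν : Measure S) (h : S → X) :
    0 ≤ ∫ t, ‖h t‖ ^ p ∂ν :=
  integral_nonneg fun t => Real.rpow_nonneg (norm_nonneg _) p

lemma st19_norm_eq {p : ℝ} (hp : 1 ≤ p) {ν : Measure S} {h : S → X}
    (hm : MemLp h (ENNReal.ofReal p) ν) :
    (∫ t, ‖h t‖ ^ p ∂ν) ^ (1 / p) = (eLpNorm h (ENNReal.ofReal p) ν).toReal := by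
  have hp0 : (0:ℝ) < p := lt_of_lt_of_le one_pos hp
  rw [hm.eLpNorm_eq_integral_rpow_norm (by simp [ENNReal.ofReal_pos.2 hp0, ne_of_gt])
      ENNReal.ofReal_ne_top, ENNReal.toReal_ofReal hp0.le,
    ENNReal.toReal_ofReal (Real.rpow_nonneg (st19_int_nonneg p ν h) _), one_div]

lemma st19_ofReal_int {p : ℝ} (hp : 1 ≤ p) {ν : Measure S} {h : S → X}
    (hm : MemLp h (ENNReal.ofReal p) ν) :
    ∫⁻ t, ENNReal.ofReal (‖h t‖ ^ p) ∂ν = ENNReal.ofReal (∫ t, ‖h t‖ ^ p ∂ν) := by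
  have hp0 : (0:ℝ) < p := lt_of_lt_of_le one_pos hp
  have hi := hm.integrable_norm_rpow (by simp [ENNReal.ofReal_pos.2 hp0, ne_of_gt])
      ENNReal.ofReal_ne_top
  rw [ENNReal.toReal_ofReal hp0.le] at hi
  exact (ofReal_integral_eq_lintegral_ofReal hi
    (Filter.Eventually.of_forall fun t => Real.rpow_nonneg (norm_nonneg _) p)).symm

lemma st19_triangle {p : ℝ} (hp : 1 ≤ p) {ν : Measure S} {h₁ h₂ : S → X}
    (hm₁ : MemLp h₁ (ENNReal.ofReal p) ν) (hm₂ : MemLp h₂ (ENNReal.ofReal p) ν) :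
    (∫ t, ‖h₁ t + h₂ t‖ ^ p ∂ν) ^ (1 / p) ≤
      (∫ t, ‖h₁ t‖ ^ p ∂ν) ^ (1 / p) + (∫ t, ‖h₂ t‖ ^ p ∂ν) ^ (1 / p) := by
  have hP1 : (1:ℝ≥0∞) ≤ ENNReal.ofReal p := by
    rw [← ENNReal.ofReal_one]; exact ENNReal.ofReal_le_ofReal hp
  have h12 : MemLp (h₁ + h₂) (ENNReal.ofReal p) ν := hm₁.add hm₂
  have : (∫ t, ‖h₁ t + h₂ t‖ ^ p ∂ν) ^ (1 / p) =
      (eLpNorm (h₁ + h₂) (ENNReal.ofReal p) ν).toReal := st19_norm_eq hp h12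
  rw [this, st19_norm_eq hp hm₁, st19_norm_eq hp hm₂,
    ← ENNReal.toReal_add hm₁.eLpNorm_ne_top hm₂.eLpNorm_ne_top]
  exact ENNReal.toReal_mono
    (by exact ENNReal.add_ne_top.2 ⟨hm₁.eLpNorm_ne_top, hm₂.eLpNorm_ne_top⟩)
    (eLpNorm_add_le hm₁.1 hm₂.1 hP1)

lemma st19_liminf_enn {p : ℝ} (hp0 : 0 < p) (r : ℕ → ℝ) (D : ℝ) (hD0 : 0 ≤ D)
    (hev : ∀ ε : ℝ, 0 < ε → ∀ᶠ n in atTop, D - ε ≤ r n) :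
    ENNReal.ofReal (D ^ p) ≤ liminf (fun n => ENNReal.ofReal (r n ^ p)) atTop := by
  rcases eq_or_lt_of_le hD0 with hD | hD
  · simp [← hD, Real.zero_rpow hp0.ne']
  · have htd : Tendsto (fun e : ℝ => ENNReal.ofReal ((D - e) ^ p)) (𝓝[>] (0:ℝ))
        (𝓝 (ENNReal.ofReal (D ^ p))) := by
      have hc : Continuous fun e : ℝ => ENNReal.ofReal ((D - e) ^ p) :=
        ENNReal.continuous_ofReal.comp ((st19_cont_rpow hp0).comp
          (continuous_const.sub continuous_id))
      have := hc.tendsto 0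
      simpa using this.mono_left nhdsWithin_le_nhds
    refine le_of_tendsto htd ?_
    filter_upwards [Ioo_mem_nhdsGT_of_mem (Set.mem_Ico.2 ⟨le_rfl, hD⟩)] with e he
    refine le_liminf_of_le (by isBoundedDefault) ?_
    filter_upwards [hev e he.1] with n hn
    exact ENNReal.ofReal_le_ofReal
      (Real.rpow_le_rpow (by linarith [he.2]) hn hp0.le)

end Helpers

set_option maxHeartbeats 1000000 in
/-- Uniform-Opial-type inequality in Lebesgue–Bochner spaces `L^p(μ,X)` for a Banach space `X`
with the uniform Opial property: given `M, R > 0` and `f₀ ∈ L^p(μ,X)` with `f₀ ≠ 0`, there is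
`η > 0` such that whenever `(f n)` is a sequence in `L^p(μ,X)` with `sup_n ‖f n‖_p ≤ R`,
converging weakly to `0` pointwise a.e. with `lim ‖f n t‖` existing and `≤ M` a.e., then
`limsup ‖f n‖_p + η ≤ limsup ‖f n - f₀‖_p`. -/
theorem statement19 {S : Type*} [MeasurableSpace S] (μ : Measure S)
    [IsFiniteMeasure μ] [μ.IsComplete] (p : ℝ) (hp : 1 ≤ p)
    (X : Type*) [NormedAddCommGroup X] [NormedSpace ℝ X] [CompleteSpace X]
    (hOp : ∀ ε R : ℝ, 0 < ε → 0 < R → ∃ η > (0 : ℝ), ∀ (z : X) (u : ℕ → X),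
      WeaklyNull u → ε ≤ ‖z‖ → limsup (fun n => ‖u n‖) atTop ≤ R →
      η + liminf (fun n => ‖u n‖) atTop ≤ liminf (fun n => ‖u n - z‖) atTop)
    (M R : ℝ) (hM : 0 < M) (hR : 0 < R)
    (f₀ : S → X) (hf₀ : MemLp f₀ (ENNReal.ofReal p) μ) (hne : ¬ f₀ =ᵐ[μ] 0) :
    ∃ η > (0 : ℝ), ∀ f : ℕ → S → X, (∀ n, MemLp (f n) (ENNReal.ofReal p) μ) →
      (∀ n, (∫ t, ‖f n t‖ ^ p ∂μ) ^ (1 / p) ≤ R) →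
      (∀ᵐ t ∂μ, (∀ φ : X →L[ℝ] ℝ, Tendsto (fun n => φ (f n t)) atTop (𝓝 0)) ∧
        ∃ L ≤ M, Tendsto (fun n => ‖f n t‖) atTop (𝓝 L)) →
      limsup (fun n => (∫ t, ‖f n t‖ ^ p ∂μ) ^ (1 / p)) atTop + η ≤
        limsup (fun n => (∫ t, ‖f n t - f₀ t‖ ^ p ∂μ) ^ (1 / p)) atTop := by
  classical
  have hp0 : (0:ℝ) < p := lt_of_lt_of_le one_pos hp
  set P : ℝ≥0∞ := ENNReal.ofReal p with hPdef
  have hcont : Continuous fun x : ℝ => x ^ p := st19_cont_rpow hp0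
  -- measurable representative of f₀
  set g₀ : S → X := hf₀.1.mk f₀ with hg₀def
  have hg₀m : StronglyMeasurable g₀ := hf₀.1.stronglyMeasurable_mk
  have hg₀e : f₀ =ᵐ[μ] g₀ := hf₀.1.ae_eq_mk
  have hg₀mem : MemLp g₀ P μ := hf₀.ae_eq hg₀e
  -- find ε with positive measure of A
  obtain ⟨ε, hε, A, hAmeas, hA⟩ :
      ∃ ε : ℝ, 0 < ε ∧ ∃ A : Set S, MeasurableSet A ∧
        (A = {t | ε ≤ ‖g₀ t‖} ∧ 0 < μ {t | ε ≤ ‖g₀ t‖}) := by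
    have hgne : ¬ g₀ =ᵐ[μ] 0 := fun h => hne (hg₀e.trans h)
    have h1 : μ {t | g₀ t ≠ 0} ≠ 0 := by
      intro h
      exact hgne (by simpa [EventuallyEq, ae_iff] using h)
    have hsub : {t | g₀ t ≠ 0} ⊆ ⋃ k : ℕ, {t | 1 / ((k:ℝ) + 1) ≤ ‖g₀ t‖} := by
      intro t ht
      obtain ⟨k, hk⟩ := exists_nat_one_div_lt (norm_pos_iff.2 ht)
      exact Set.mem_iUnion.2 ⟨k, hk.le⟩
    have : ∃ k : ℕ, μ {t | 1 / ((k:ℝ) + 1) ≤ ‖g₀ t‖} ≠ 0 := by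
      by_contra hc
      push_neg at hc
      exact h1 (le_antisymm (le_trans (measure_mono hsub)
        (le_of_eq (measure_iUnion_null hc))) (zero_le))
    obtain ⟨k, hk⟩ := this
    refine ⟨1 / ((k:ℝ) + 1), by positivity, _, ?_, rfl, pos_iff_ne_zero.2 hk⟩
    exact hg₀m.norm.measurable measurableSet_Ici
  obtain ⟨hAdef, hApos⟩ := hA
  set aR : ℝ := (μ A).toReal with haRdef
  have haR : 0 < aR := by
    rw [haRdef, hAdef]
    exact ENNReal.toReal_pos hApos.ne' (measure_ne_top μ _)
  -- Opial modulus
  obtain ⟨η₀, hη₀, hOpial⟩ := hOp ε M hε hM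
  set c0 : ℝ := η₀ ^ p * (aR / 2) with hc0def
  have hc0 : 0 < c0 := by
    have := Real.rpow_pos_of_pos hη₀ p
    positivity
  set m : ℝ := (μ Set.univ).toReal + 1 with hmdef
  have hm1 : 0 < m := by positivity
  set ξ0 : ℝ := c0 / (4 * m) with hξ0def
  have hξ0 : 0 < ξ0 := by positivity
  set K : ℝ := max (M + 1) (R + 1) with hKdef
  -- uniform continuity modulus on [0,K]
  obtain ⟨θ₁, hθ₁pos, hθ₁⟩ : ∃ θ₁ > (0:ℝ), ∀ x ∈ Set.Icc (0:ℝ) K, ∀ y ∈ Set.Icc (0:ℝ) K,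
      dist x y < θ₁ → dist (x ^ p) (y ^ p) < ξ0 :=
    Metric.uniformContinuousOn_iff.1
      (isCompact_Icc.uniformContinuousOn_of_continuous hcont.continuousOn) ξ0 hξ0
  set θ₀ : ℝ := min θ₁ 1 with hθ₀def
  have hθ₀pos : 0 < θ₀ := lt_min hθ₁pos one_pos
  have hθ₀1 : θ₀ ≤ 1 := min_le_right _ _
  -- absolute continuity for ∫ ‖g₀‖^p
  have hg₀fin : ∫⁻ t, ENNReal.ofReal (‖g₀ t‖ ^ p) ∂μ ≠ ⊤ := by
    rw [st19_ofReal_int hp hg₀mem]; exact ENNReal.ofReal_ne_top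
  obtain ⟨δ₂, hδ₂pos, hδ₂⟩ := exists_pos_setLIntegral_lt_of_measure_lt hg₀fin
    (ε := ENNReal.ofReal (θ₀ ^ p))
    (ne_of_gt (ENNReal.ofReal_pos.2 (Real.rpow_pos_of_pos hθ₀pos p)))
  set δe : ℝ≥0∞ := min (δ₂ / 2) (min (μ A / 2) 1) with hδedef
  have hδe0 : 0 < δe := by
    refine lt_min (ENNReal.div_pos hδ₂pos.ne' (by norm_num)) (lt_min ?_ (by norm_num))
    exact ENNReal.div_pos (by rw [hAdef]; exact hApos.ne') (by norm_num)
  have hδetop : δe ≠ ⊤ := by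
    refine ne_top_of_le_ne_top (by norm_num : (1:ℝ≥0∞) ≠ ⊤) ?_
    exact le_trans (min_le_right _ _) (min_le_right _ _)
  set δr : ℝ := δe.toReal with hδrdef
  have hδr0 : 0 < δr := ENNReal.toReal_pos hδe0.ne' hδetop
  have hδe_lt : δe < δ₂ := by
    rcases eq_or_ne δ₂ ⊤ with h | h
    · exact lt_of_le_of_lt (le_trans (min_le_right _ _) (min_le_right _ _))
        (by rw [h]; norm_num)
    · exact lt_of_le_of_lt (min_le_left _ _) (ENNReal.half_lt_self hδ₂pos.ne' h)
  -- η via compactness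
  obtain ⟨x₀, hx₀mem, hx₀min⟩ := isCompact_Icc.exists_isMinOn
    (Set.nonempty_Icc.2 hR.le)
    (Continuous.continuousOn (by
      exact ((st19_cont_rpow (by positivity : (0:ℝ) < 1/p)).comp
        (hcont.add continuous_const)).sub continuous_id) :
      ContinuousOn (fun x : ℝ => (x ^ p + c0 / 2) ^ (1 / p) - x) (Set.Icc 0 R))
  set η : ℝ := (x₀ ^ p + c0 / 2) ^ (1 / p) - x₀ with hηdef
  have hη : 0 < η := by
    rw [hηdef, sub_pos]
    have hx0 : (0:ℝ) ≤ x₀ := hx₀mem.1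
    calc x₀ = (x₀ ^ p) ^ (1/p) := by
          rw [one_div, Real.rpow_rpow_inv hx0 hp0.ne']
      _ < (x₀ ^ p + c0 / 2) ^ (1/p) := by
          apply Real.rpow_lt_rpow (Real.rpow_nonneg hx0 p) (by linarith) (by positivity)
  refine ⟨η, hη, ?_⟩
  intro f hmem hbound hae
  set a : ℕ → ℝ := fun n => (∫ t, ‖f n t‖ ^ p ∂μ) ^ (1 / p) with hadef
  set b : ℕ → ℝ := fun n => (∫ t, ‖f n t - f₀ t‖ ^ p ∂μ) ^ (1 / p) with hbdef
  have hmemd : ∀ n, MemLp (fun t => f n t - f₀ t) P μ := fun n => (hmem n).sub hf₀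
  have ha0 : ∀ n, 0 ≤ a n := fun n => Real.rpow_nonneg (st19_int_nonneg _ _ _) _
  have hb0 : ∀ n, 0 ≤ b n := fun n => Real.rpow_nonneg (st19_int_nonneg _ _ _) _
  have hIa : ∀ n, a n ^ p = ∫ t, ‖f n t‖ ^ p ∂μ := by
    intro n
    rw [hadef, one_div, Real.rpow_inv_rpow (st19_int_nonneg _ _ _) hp0.ne']
  have hJb : ∀ n, b n ^ p = ∫ t, ‖f n t - f₀ t‖ ^ p ∂μ := by
    intro n
    rw [hbdef, one_div, Real.rpow_inv_rpow (st19_int_nonneg _ _ _) hp0.ne']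
  have hIle : ∀ n, ∫ t, ‖f n t‖ ^ p ∂μ ≤ R ^ p := by
    intro n
    rw [← hIa n]
    exact Real.rpow_le_rpow (ha0 n) (hbound n) hp0.le
  set cF : ℝ := (∫ t, ‖f₀ t‖ ^ p ∂μ) ^ (1 / p) with hcFdef
  have hcF0 : 0 ≤ cF := Real.rpow_nonneg (st19_int_nonneg _ _ _) _
  have hbb : ∀ n, b n ≤ R + cF := by
    intro n
    have h := st19_triangle hp (hmem n) hf₀.neg (ν := μ)
    simp only [Pi.neg_apply, ← sub_eq_add_neg, norm_neg] at h
    calc b n ≤ a n + cF := h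
      _ ≤ R + cF := by linarith [hbound n]
  have hJle : ∀ n, ∫ t, ‖f n t - f₀ t‖ ^ p ∂μ ≤ (R + cF) ^ p := by
    intro n
    rw [← hJb n]
    exact Real.rpow_le_rpow (hb0 n) (hbb n) hp0.le
  -- measurable representatives
  set g : ℕ → S → X := fun n => (hmem n).1.mk (f n) with hgdef
  have hgm : ∀ n, StronglyMeasurable (g n) := fun n => (hmem n).1.stronglyMeasurable_mk
  have hge : ∀ n, f n =ᵐ[μ] g n := fun n => (hmem n).1.ae_eq_mk
  have haeconv : ∀ᵐ t ∂μ, ∃ l, Tendsto (fun n => ‖g n t‖) atTop (𝓝 l) := by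
    filter_upwards [hae, ae_all_iff.2 hge] with t ht hg'
    obtain ⟨_, L', _, hL'⟩ := ht
    refine ⟨L', ?_⟩
    have heq : (fun n => ‖g n t‖) = fun n => ‖f n t‖ := funext fun n => by rw [hg' n]
    rw [heq]; exact hL'
  obtain ⟨L, hLm, hLconv⟩ := exists_stronglyMeasurable_limit_of_tendsto_ae
    (fun n => (hgm n).norm.aestronglyMeasurable) haeconv
  have hΦ : ∀ᵐ t ∂μ, ((∀ n, f n t = g n t) ∧ f₀ t = g₀ t ∧
      (∀ φ : X →L[ℝ] ℝ, Tendsto (fun n => φ (f n t)) atTop (𝓝 0)) ∧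
      Tendsto (fun n => ‖f n t‖) atTop (𝓝 (L t)) ∧ 0 ≤ L t ∧ L t ≤ M) := by
    filter_upwards [hae, ae_all_iff.2 hge, hg₀e, hLconv] with t ht hg' h0 hLt
    obtain ⟨hw, L', hL'M, hL'⟩ := ht
    have heq : (fun n => ‖g n t‖) = fun n => ‖f n t‖ := funext fun n => by rw [hg' n]
    rw [heq] at hLt
    have hLL' : L t = L' := tendsto_nhds_unique hLt hL'
    exact ⟨hg', h0, hw, hLt, ge_of_tendsto' hLt fun n => norm_nonneg _, hLL' ▸ hL'M⟩
  obtain ⟨Nset, hNsub, hNmeas, hNnull⟩ := exists_measurable_superset_of_null (ae_iff.mp hΦ)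
  have hNprop : ∀ t, t ∉ Nset → ((∀ n, f n t = g n t) ∧ f₀ t = g₀ t ∧
      (∀ φ : X →L[ℝ] ℝ, Tendsto (fun n => φ (f n t)) atTop (𝓝 0)) ∧
      Tendsto (fun n => ‖f n t‖) atTop (𝓝 (L t)) ∧ 0 ≤ L t ∧ L t ≤ M) := by
    intro t ht
    by_contra hc
    exact ht (hNsub hc)
  -- Egorov
  obtain ⟨tb, htbm, htbμ, htbu⟩ := tendstoUniformlyOn_of_ae_tendsto'
    (fun n => (hgm n).norm) hLm hLconv hδr0
  set E : Set S := tbᶜ ∩ Nsetᶜ with hEdef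
  have hEm : MeasurableSet E := htbm.compl.inter hNmeas.compl
  set G : Set S := Eᶜ with hGdef
  have hGm : MeasurableSet G := hEm.compl
  have hGμ : μ G ≤ δe := by
    have hGeq : G = tb ∪ Nset := by
      rw [hGdef, hEdef, Set.compl_inter, compl_compl, compl_compl]
    rw [hGeq]
    refine le_trans (measure_union_le _ _) ?_
    rw [hNnull, add_zero]
    rwa [hδrdef, ENNReal.ofReal_toReal hδetop] at htbμ
  have hGlt : μ G < δ₂ := lt_of_le_of_lt hGμ hδe_lt
  have hAE : aR / 2 ≤ (μ (A ∩ E)).toReal := by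
    have h1 : μ A - μ G ≤ μ (A ∩ E) := by
      have hAdiff : A \ G = A ∩ E := by rw [hGdef, Set.diff_eq, compl_compl]
      rw [← hAdiff]; exact le_measure_diff
    have hGA : μ G ≤ μ A / 2 := le_trans hGμ
      (le_trans (min_le_right _ _) (min_le_left _ _))
    have h2 : μ A / 2 ≤ μ (A ∩ E) := by
      calc μ A / 2 = μ A - μ A / 2 := (ENNReal.sub_half (measure_ne_top μ A)).symm
        _ ≤ μ A - μ G := tsub_le_tsub_left hGA _
        _ ≤ μ (A ∩ E) := h1
    calc aR / 2 = (μ A / 2).toReal := by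
          rw [ENNReal.toReal_div, haRdef]; norm_num
      _ ≤ (μ (A ∩ E)).toReal := ENNReal.toReal_mono (measure_ne_top μ _) h2
  -- f₀ is small on G
  have hbGp : ∫ t in G, ‖f₀ t‖ ^ p ∂μ < θ₀ ^ p := by
    have hlt := hδ₂ G hGlt
    have heq : ∫ t in G, ‖f₀ t‖ ^ p ∂μ = ∫ t in G, ‖g₀ t‖ ^ p ∂μ :=
      integral_congr_ae ((ae_restrict_of_ae hg₀e).mono fun t ht => by simp only [ht])
    rw [heq, st19_int_eq hp0 hg₀m.aestronglyMeasurable.restrict,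
      ← ENNReal.toReal_ofReal (Real.rpow_nonneg hθ₀pos.le p)]
    exact ENNReal.toReal_strict_mono ENNReal.ofReal_ne_top hlt
  set bG : ℝ := (∫ t in G, ‖f₀ t‖ ^ p ∂μ) ^ (1 / p) with hbGdef
  have hbG0 : 0 ≤ bG := Real.rpow_nonneg (st19_int_nonneg _ _ _) _
  have hbGθ : bG < θ₀ := by
    rw [hbGdef]
    calc (∫ t in G, ‖f₀ t‖ ^ p ∂μ) ^ (1 / p) < (θ₀ ^ p) ^ (1 / p) :=
        Real.rpow_lt_rpow (st19_int_nonneg _ _ _) hbGp (by positivity)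
      _ = θ₀ := by rw [one_div, Real.rpow_rpow_inv hθ₀pos.le hp0.ne']
  -- uniform convergence index
  obtain ⟨N₁, hN₁⟩ := eventually_atTop.1 (Metric.tendstoUniformlyOn_iff.1 htbu θ₀ hθ₀pos)
  -- pointwise upper bound on E
  have hEub : ∀ n, N₁ ≤ n → ∀ t ∈ E, ‖f n t‖ ^ p ≤ L t ^ p + ξ0 := by
    intro n hn t ht
    obtain ⟨hfg', hf₀g, hwk, hLt, hL0, hLM⟩ := hNprop t ht.2
    have hdist := hN₁ n hn t ht.1
    rw [← hfg' n] at hdist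
    have habs1 := abs_lt.1 (by rwa [Real.dist_eq] at hdist)
    have hK1 : M + 1 ≤ K := le_max_left _ _
    have hmem1 : ‖f n t‖ ∈ Set.Icc (0:ℝ) K :=
      ⟨norm_nonneg _, by have hθK := hθ₀1; linarith [habs1.1, habs1.2]⟩
    have hmem2 : L t ∈ Set.Icc (0:ℝ) K := ⟨hL0, by linarith⟩
    have hmod := hθ₁ _ hmem1 _ hmem2
      (by rw [dist_comm] at hdist; exact lt_of_lt_of_le hdist (min_le_left _ _))
    have habs2 := abs_lt.1 (by rwa [Real.dist_eq] at hmod)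
    linarith [habs2.1, habs2.2]
  -- pointwise lower bound via the Opial property
  have hlow : ∀ t, t ∉ Nset → (0 ≤ L t ∧
      L t + η₀ * Set.indicator A (fun _ => (1:ℝ)) t ≤
        liminf (fun n => ‖f n t - f₀ t‖) atTop) := by
    intro t ht
    obtain ⟨hfg', hf₀g, hwk, hLt, hL0, hLM⟩ := hNprop t ht
    refine ⟨hL0, ?_⟩
    have hlimsup : limsup (fun n => ‖f n t‖) atTop = L t := hLt.limsup_eq
    have hliminf : liminf (fun n => ‖f n t‖) atTop = L t := hLt.liminf_eq
    by_cases htA : t ∈ A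
    · have hεz : ε ≤ ‖f₀ t‖ := by
        rw [hf₀g]
        rw [hAdef] at htA
        exact htA
      have hO := hOpial (f₀ t) (fun n => f n t) hwk hεz (by rw [hlimsup]; exact hLM)
      rw [hliminf] at hO
      simp only [Set.indicator_of_mem htA, mul_one]
      linarith
    · simp only [Set.indicator_of_notMem htA, mul_zero, add_zero]
      by_cases hz : f₀ t = 0
      · have heq : (fun n => ‖f n t - f₀ t‖) = fun n => ‖f n t‖ := by
          funext n; rw [hz, sub_zero]
        rw [heq, hliminf]
      · obtain ⟨η', hη', hop'⟩ := hOp ‖f₀ t‖ M (norm_pos_iff.2 hz) hM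
        have hO := hop' (f₀ t) (fun n => f n t) hwk le_rfl (by rw [hlimsup]; exact hLM)
        rw [hliminf] at hO
        linarith
  -- P facts and integrability
  have hP0 : P ≠ 0 := by rw [hPdef]; exact (ENNReal.ofReal_pos.2 hp0).ne'
  have hPtop : P ≠ ⊤ := by rw [hPdef]; exact ENNReal.ofReal_ne_top
  have hPto : P.toReal = p := by rw [hPdef]; exact ENNReal.toReal_ofReal hp0.le
  have hInt1 : ∀ n, Integrable (fun t => ‖f n t‖ ^ p) μ := by
    intro n; have h := (hmem n).integrable_norm_rpow hP0 hPtop; rwa [hPto] at h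
  have hInt2 : ∀ n, Integrable (fun t => ‖f n t - f₀ t‖ ^ p) μ := by
    intro n; have h := (hmemd n).integrable_norm_rpow hP0 hPtop; rwa [hPto] at h
  -- boundedness for limsup machinery
  have hbA_below : IsBoundedUnder (· ≥ ·) atTop a := isBoundedUnder_of ⟨0, fun n => ha0 n⟩
  have hbB_above : IsBoundedUnder (· ≤ ·) atTop b := isBoundedUnder_of ⟨R + cF, fun n => hbb n⟩
  refine le_of_forall_pos_le_add ?_
  intro ε' hε'
  set Ainf : ℝ := limsup a atTop with hAinfdef
  have hfreq : ∃ᶠ n in atTop, Ainf - ε' < a n :=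
    frequently_lt_of_lt_limsup (hbA_below.isCoboundedUnder_flip) (by linarith)
  obtain ⟨φ, hφmono, hφP⟩ := extraction_of_frequently_atTop hfreq
  set u : ℕ → ℝ := fun n => ∫ t in G, ‖f n t‖ ^ p ∂μ with hudef
  set v' : ℕ → ℝ := fun n => ∫ t in E, ‖f n t - f₀ t‖ ^ p ∂μ with hv'def
  set w : ℕ → ℝ := fun n => ∫ t in G, ‖f n t - f₀ t‖ ^ p ∂μ with hwdef
  have humem : ∀ n, u n ∈ Set.Icc (0:ℝ) (R ^ p) := fun n =>
    ⟨integral_nonneg fun t => Real.rpow_nonneg (norm_nonneg _) p,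
     le_trans (setIntegral_le_integral (hInt1 n)
       (Filter.Eventually.of_forall fun t => Real.rpow_nonneg (norm_nonneg _) p)) (hIle n)⟩
  have hwmem : ∀ n, w n ∈ Set.Icc (0:ℝ) ((R + cF) ^ p) := fun n =>
    ⟨integral_nonneg fun t => Real.rpow_nonneg (norm_nonneg _) p,
     le_trans (setIntegral_le_integral (hInt2 n)
       (Filter.Eventually.of_forall fun t => Real.rpow_nonneg (norm_nonneg _) p)) (hJle n)⟩
  have hv'mem : ∀ n, v' n ∈ Set.Icc (0:ℝ) ((R + cF) ^ p) := fun n =>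
    ⟨integral_nonneg fun t => Real.rpow_nonneg (norm_nonneg _) p,
     le_trans (setIntegral_le_integral (hInt2 n)
       (Filter.Eventually.of_forall fun t => Real.rpow_nonneg (norm_nonneg _) p)) (hJle n)⟩
  have hamem : ∀ n, a n ∈ Set.Icc (0:ℝ) R := fun n => ⟨ha0 n, hbound n⟩
  obtain ⟨su, hsu_mem, ψ₁, hψ₁, hu1⟩ := tendsto_subseq_of_bounded
    (Metric.isBounded_Icc (0:ℝ) (R ^ p)) (fun k => humem (φ k))
  obtain ⟨sw, hsw_mem, ψ₂, hψ₂, hw2⟩ := tendsto_subseq_of_bounded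
    (Metric.isBounded_Icc (0:ℝ) ((R + cF) ^ p)) (fun k => hwmem (φ (ψ₁ k)))
  obtain ⟨sv', hsv'_mem, ψ₃, hψ₃, hv3⟩ := tendsto_subseq_of_bounded
    (Metric.isBounded_Icc (0:ℝ) ((R + cF) ^ p)) (fun k => hv'mem (φ (ψ₁ (ψ₂ k))))
  obtain ⟨sa, hsa_mem, ψ₄, hψ₄, ha4⟩ := tendsto_subseq_of_bounded
    (Metric.isBounded_Icc (0:ℝ) R) (fun k => hamem (φ (ψ₁ (ψ₂ (ψ₃ k)))))
  set j : ℕ → ℕ := fun k => φ (ψ₁ (ψ₂ (ψ₃ (ψ₄ k)))) with hjdef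
  have hjmono : StrictMono j := hφmono.comp (hψ₁.comp (hψ₂.comp (hψ₃.comp hψ₄)))
  have hjtend : Tendsto j atTop atTop := hjmono.tendsto_atTop
  have hu_j : Tendsto (fun k => u (j k)) atTop (𝓝 su) :=
    hu1.comp ((hψ₂.comp (hψ₃.comp hψ₄)).tendsto_atTop)
  have hw_j : Tendsto (fun k => w (j k)) atTop (𝓝 sw) :=
    hw2.comp ((hψ₃.comp hψ₄).tendsto_atTop)
  have hv'_j : Tendsto (fun k => v' (j k)) atTop (𝓝 sv') :=
    hv3.comp hψ₄.tendsto_atTop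
  have ha_j : Tendsto (fun k => a (j k)) atTop (𝓝 sa) := ha4
  rw [isClosed_Icc.closure_eq] at hsa_mem hsu_mem hsw_mem hsv'_mem
  have hsaA : Ainf - ε' ≤ sa :=
    ge_of_tendsto ha_j (Filter.Eventually.of_forall fun k =>
      (hφP (ψ₁ (ψ₂ (ψ₃ (ψ₄ k))))).le)
  have hsu0 : 0 ≤ su := hsu_mem.1
  have hsv'0 : 0 ≤ sv' := hsv'_mem.1
  -- splitting of integrals
  have hIsplit : ∀ n, (∫ t in E, ‖f n t‖ ^ p ∂μ) + u n = ∫ t, ‖f n t‖ ^ p ∂μ :=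
    fun n => integral_add_compl hEm (hInt1 n)
  have hJsplit : ∀ n, v' n + w n = ∫ t, ‖f n t - f₀ t‖ ^ p ∂μ :=
    fun n => integral_add_compl hEm (hInt2 n)
  -- v along j converges
  have hv_j : Tendsto (fun k => ∫ t in E, ‖f (j k) t‖ ^ p ∂μ) atTop (𝓝 (sa ^ p - su)) := by
    have h1 : Tendsto (fun k => a (j k) ^ p) atTop (𝓝 (sa ^ p)) := (hcont.tendsto sa).comp ha_j
    have h2 : ∀ k, ∫ t in E, ‖f (j k) t‖ ^ p ∂μ = a (j k) ^ p - u (j k) := by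
      intro k; rw [hIa]; linarith [hIsplit (j k)]
    simp only [h2]
    exact h1.sub hu_j
  -- integrability of L^p on E
  have hLint : IntegrableOn (fun t => L t ^ p) E μ := by
    refine Integrable.mono' (integrable_const (M ^ p))
      ((hcont.comp_aestronglyMeasurable hLm.aestronglyMeasurable).restrict) ?_
    refine ae_restrict_of_forall_mem hEm fun t ht => ?_
    obtain ⟨_, _, _, _, hL0, hLM⟩ := hNprop t ht.2
    rw [Real.norm_eq_abs, abs_of_nonneg (Real.rpow_nonneg hL0 p)]
    exact Real.rpow_le_rpow hL0 hLM hp0.le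
  -- E-side upper bound in the limit
  have hsv_le : sa ^ p - su ≤ (∫ t in E, L t ^ p ∂μ) + c0 / 4 := by
    refine le_of_tendsto hv_j ?_
    filter_upwards [hjtend.eventually (eventually_ge_atTop N₁)] with k hk
    have hmono : ∫ t in E, ‖f (j k) t‖ ^ p ∂μ ≤ ∫ t in E, (L t ^ p + ξ0) ∂μ :=
      setIntegral_mono_on (hInt1 (j k)).integrableOn
        (hLint.add (integrableOn_const (measure_ne_top _ _))) hEm
        (fun t ht => hEub (j k) hk t ht)
    have hconst : ∫ t in E, (L t ^ p + ξ0) ∂μ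
        = (∫ t in E, L t ^ p ∂μ) + (μ E).toReal * ξ0 := by
      rw [integral_add hLint (integrableOn_const (measure_ne_top _ _)),
        setIntegral_const, smul_eq_mul]; rfl
    have hμE : (μ E).toReal ≤ m := by
      rw [hmdef]
      have := ENNReal.toReal_mono (measure_ne_top μ Set.univ)
        (measure_mono (Set.subset_univ E))
      linarith
    have hξμ : (μ E).toReal * ξ0 ≤ c0 / 4 := by
      have h1 : (μ E).toReal * ξ0 ≤ m * ξ0 :=
        mul_le_mul_of_nonneg_right hμE hξ0.le
      have h2 : m * ξ0 = c0 / 4 := by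
        rw [hξ0def]; field_simp
      exact le_trans h1 (le_of_eq h2)
    linarith [hmono, hconst]
  -- Fatou lower bound
  have hFatou : (∫ t in E, L t ^ p ∂μ) + c0 ≤ sv' := by
    have hmeas_k : ∀ k : ℕ, AEMeasurable
        (fun t => ENNReal.ofReal (‖f (j k) t - f₀ t‖ ^ p)) (μ.restrict E) := fun k =>
      ENNReal.measurable_ofReal.comp_aemeasurable
        ((hcont.comp_aestronglyMeasurable (hmemd (j k)).1.norm).restrict.aemeasurable)
    have hptwise : ∀ᵐ t ∂(μ.restrict E),
        ENNReal.ofReal (L t ^ p) + Set.indicator A (fun _ => ENNReal.ofReal (η₀ ^ p)) t ≤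
          liminf (fun k => ENNReal.ofReal (‖f (j k) t - f₀ t‖ ^ p)) atTop := by
      refine ae_restrict_of_forall_mem hEm fun t ht => ?_
      obtain ⟨hL0, hlin⟩ := hlow t ht.2
      by_cases htA : t ∈ A
      · simp only [Set.indicator_of_mem htA, mul_one] at hlin ⊢
        have hD0 : (0:ℝ) ≤ L t + η₀ := by linarith
        have hev : ∀ e : ℝ, 0 < e → ∀ᶠ k in atTop,
            L t + η₀ - e ≤ ‖f (j k) t - f₀ t‖ := by
          intro e he
          have hlt : L t + η₀ - e < liminf (fun n => ‖f n t - f₀ t‖) atTop := by linarith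
          exact ((hjtend.eventually (eventually_lt_of_lt_liminf hlt
            (isBoundedUnder_of ⟨0, fun n => norm_nonneg _⟩))).mono fun k hk => hk.le)
        refine le_trans ?_ (st19_liminf_enn hp0 _ _ hD0 hev)
        rw [← ENNReal.ofReal_rpow_of_nonneg hL0 hp0.le,
          ← ENNReal.ofReal_rpow_of_nonneg hη₀.le hp0.le,
          ← ENNReal.ofReal_rpow_of_nonneg hD0 hp0.le,
          ENNReal.ofReal_add hL0 hη₀.le]
        exact ENNReal.add_rpow_le_rpow_add _ _ hp
      · simp only [Set.indicator_of_notMem htA, mul_zero, add_zero] at hlin ⊢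
        have hev : ∀ e : ℝ, 0 < e → ∀ᶠ k in atTop,
            L t - e ≤ ‖f (j k) t - f₀ t‖ := by
          intro e he
          have hlt : L t - e < liminf (fun n => ‖f n t - f₀ t‖) atTop := by linarith
          exact ((hjtend.eventually (eventually_lt_of_lt_liminf hlt
            (isBoundedUnder_of ⟨0, fun n => norm_nonneg _⟩))).mono fun k hk => hk.le)
        exact st19_liminf_enn hp0 _ _ hL0 hev
    have hFat1 : ∫⁻ t in E, (ENNReal.ofReal (L t ^ p) +
          Set.indicator A (fun _ => ENNReal.ofReal (η₀ ^ p)) t) ∂μ ≤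
        liminf (fun k => ∫⁻ t in E, ENNReal.ofReal (‖f (j k) t - f₀ t‖ ^ p) ∂μ) atTop :=
      le_trans (lintegral_mono_ae hptwise) (lintegral_liminf_le' hmeas_k)
    have hRHSeq : ∀ k, ∫⁻ t in E, ENNReal.ofReal (‖f (j k) t - f₀ t‖ ^ p) ∂μ
        = ENNReal.ofReal (v' (j k)) := fun k =>
      st19_ofReal_int hp ((hmemd (j k)).restrict E)
    have hRHSlim : liminf (fun k => ∫⁻ t in E,
        ENNReal.ofReal (‖f (j k) t - f₀ t‖ ^ p) ∂μ) atTop = ENNReal.ofReal sv' := by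
      simp only [hRHSeq]
      exact ((ENNReal.continuous_ofReal.tendsto sv').comp hv'_j).liminf_eq
    have hLnn : 0 ≤ᵐ[μ.restrict E] fun t => L t ^ p :=
      ae_restrict_of_forall_mem hEm fun t ht =>
        Real.rpow_nonneg (hNprop t ht.2).2.2.2.2.1 p
    have hLHSeq : ∫⁻ t in E, (ENNReal.ofReal (L t ^ p) +
          Set.indicator A (fun _ => ENNReal.ofReal (η₀ ^ p)) t) ∂μ =
        ENNReal.ofReal (∫ t in E, L t ^ p ∂μ) + ENNReal.ofReal (η₀ ^ p) * μ (A ∩ E) := by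
      have hLpm : Measurable fun t => ENNReal.ofReal (L t ^ p) := by
        exact ENNReal.measurable_ofReal.comp ((hcont.measurable).comp hLm.measurable)
      rw [lintegral_add_left hLpm]
      congr 1
      · exact (ofReal_integral_eq_lintegral_ofReal hLint hLnn).symm
      · rw [lintegral_indicator hAmeas, setLIntegral_const,
          Measure.restrict_apply hAmeas]
    have hcomb : ENNReal.ofReal (∫ t in E, L t ^ p ∂μ) + ENNReal.ofReal (η₀ ^ p) * μ (A ∩ E)
        ≤ ENNReal.ofReal sv' := by
      rw [← hLHSeq, ← hRHSlim]; exact hFat1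
    have hfin1 : ENNReal.ofReal (η₀ ^ p) * μ (A ∩ E) ≠ ⊤ :=
      ENNReal.mul_ne_top ENNReal.ofReal_ne_top (measure_ne_top μ _)
    have hreal := ENNReal.toReal_mono ENNReal.ofReal_ne_top hcomb
    rw [ENNReal.toReal_add ENNReal.ofReal_ne_top hfin1, ENNReal.toReal_ofReal hsv'0,
      ENNReal.toReal_ofReal (integral_nonneg_of_ae hLnn), ENNReal.toReal_mul,
      ENNReal.toReal_ofReal (Real.rpow_nonneg hη₀.le p)] at hreal
    have hc0le : c0 ≤ η₀ ^ p * (μ (A ∩ E)).toReal := by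
      rw [hc0def]
      exact mul_le_mul_of_nonneg_left hAE (Real.rpow_nonneg hη₀.le p)
    linarith
  -- G-side lower bound
  have hp1inv : (0:ℝ) < 1 / p := by positivity
  have hGtri : ∀ n, u n ^ (1 / p) ≤ w n ^ (1 / p) + bG := by
    intro n
    have h := st19_triangle hp ((hmemd n).restrict G) (hf₀.restrict G)
    simp only [hudef, hwdef, hbGdef]
    simpa [sub_add_cancel] using h
  have hsuw : su ^ (1 / p) ≤ sw ^ (1 / p) + bG := by
    have h1 : Tendsto (fun k => u (j k) ^ (1 / p)) atTop (𝓝 (su ^ (1 / p))) :=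
      ((st19_cont_rpow hp1inv).tendsto su).comp hu_j
    have h2 : Tendsto (fun k => w (j k) ^ (1 / p) + bG) atTop (𝓝 (sw ^ (1 / p) + bG)) :=
      (((st19_cont_rpow hp1inv).tendsto sw).comp hw_j).add tendsto_const_nhds
    exact le_of_tendsto_of_tendsto' h1 h2 fun k => hGtri (j k)
  have hwlb : su - c0 / 4 ≤ sw := by
    set s1 : ℝ := su ^ (1 / p) with hs1def
    have hs10 : 0 ≤ s1 := Real.rpow_nonneg hsu_mem.1 _
    have hs1R : s1 ≤ R := by
      calc s1 ≤ (R ^ p) ^ (1 / p) :=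
          Real.rpow_le_rpow hsu_mem.1 hsu_mem.2 hp1inv.le
        _ = R := by rw [one_div, Real.rpow_rpow_inv hR.le hp0.ne']
    have hs1p : s1 ^ p = su := by
      rw [hs1def, one_div, Real.rpow_inv_rpow hsu_mem.1 hp0.ne']
    set y : ℝ := max (s1 - bG) 0 with hydef
    have hy0 : 0 ≤ y := le_max_right _ _
    have hys1 : y ≤ s1 := max_le (by linarith) hs10
    have hK2 : R + 1 ≤ K := le_max_right _ _
    have hyK : y ∈ Set.Icc (0:ℝ) K := ⟨hy0, by linarith⟩
    have hs1K : s1 ∈ Set.Icc (0:ℝ) K := ⟨hs10, by linarith⟩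
    have hdist : dist s1 y < θ₁ := by
      rw [Real.dist_eq, abs_of_nonneg (by linarith)]
      have : s1 - bG ≤ y := le_max_left _ _
      have hθθ : θ₀ ≤ θ₁ := min_le_left _ _
      linarith [hbGθ]
    have hmod := hθ₁ s1 hs1K y hyK hdist
    have habs := abs_lt.1 (by rwa [Real.dist_eq] at hmod)
    have hy_le : y ≤ sw ^ (1 / p) :=
      max_le (by linarith [hsuw]) (Real.rpow_nonneg hsw_mem.1 _)
    have hyp : y ^ p ≤ sw := by
      calc y ^ p ≤ (sw ^ (1 / p)) ^ p := Real.rpow_le_rpow hy0 hy_le hp0.le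
        _ = sw := by rw [one_div, Real.rpow_inv_rpow hsw_mem.1 hp0.ne']
    have hξc : ξ0 ≤ c0 / 4 := by
      have hm1' : (1:ℝ) ≤ m := by
        rw [hmdef]
        have := ENNReal.toReal_nonneg (a := μ Set.univ)
        linarith
      rw [hξ0def]
      gcongr
      linarith
    linarith [habs.1, habs.2, hyp, hξc, hs1p]
  -- assembly
  have hsum : sa ^ p + c0 / 2 ≤ sv' + sw := by
    linarith [hFatou, hsv_le, hwlb]
  have hb_j : Tendsto (fun k => b (j k)) atTop (𝓝 ((sv' + sw) ^ (1 / p))) := by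
    have hJc : Tendsto (fun k => v' (j k) + w (j k)) atTop (𝓝 (sv' + sw)) := hv'_j.add hw_j
    have hbeq : ∀ k, b (j k) = (v' (j k) + w (j k)) ^ (1 / p) := by
      intro k
      simp only [hbdef]
      rw [hJsplit (j k)]
    simp only [hbeq]
    exact ((st19_cont_rpow hp1inv).tendsto _).comp hJc
  have hmin : η ≤ (sa ^ p + c0 / 2) ^ (1 / p) - sa := by
    rw [hηdef]
    exact hx₀min hsa_mem
  have hfinal1 : sa + η ≤ (sv' + sw) ^ (1 / p) := by
    have hbase : (0:ℝ) ≤ sa ^ p + c0 / 2 :=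
      add_nonneg (Real.rpow_nonneg hsa_mem.1 p) (by linarith)
    have h1 : (sa ^ p + c0 / 2) ^ (1 / p) ≤ (sv' + sw) ^ (1 / p) :=
      Real.rpow_le_rpow hbase hsum hp1inv.le
    linarith [hmin, h1]
  have hBl : (sv' + sw) ^ (1 / p) ≤ limsup b atTop := by
    by_contra hcon
    push_neg at hcon
    set c : ℝ := (limsup b atTop + (sv' + sw) ^ (1 / p)) / 2 with hcdef
    have h1 : limsup b atTop < c := by rw [hcdef]; linarith
    have h2 : c < (sv' + sw) ^ (1 / p) := by rw [hcdef]; linarith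
    have hev := eventually_lt_of_limsup_lt h1 hbB_above
    have hle := le_of_tendsto hb_j ((hjtend.eventually hev).mono fun k hk => hk.le)
    linarith
  have hkey : sa + η ≤ limsup b atTop := le_trans hfinal1 hBl
  calc limsup a atTop + η = Ainf + η := by rw [hAinfdef]
    _ ≤ sa + ε' + η := by linarith [hsaA]
    _ ≤ limsup b atTop + ε' := by linarith [hkey]
end
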